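/- arXiv:1503.06425 — 13 statements merged into one kernel-verified Lean document; each statement's English description precedes it below -/
import Mathlib

section
/- Let (X,T) be a dynamical system on a compact metric space. Then (X,T) is weakly mixing (i.e., T × T is topologically transitive on X × X) if and only if for every pair of non-empty open subsets U, V of X the hitting time set N(U,V) = {n ∈ ℕ : T^n U ∩ V ≠ ∅} is thick (contains arbitrarily long runs of consecutive integers). -/
open Set Function

set_option linter.unusedSectionVars false

section Aux

variable {X : Type*} [MetricSpace X] [CompactSpace X]

private lemma hit_iff (T : X → X) (m : ℕ) (U V : Set X) :
    (T^[m] '' U ∩ V).Nonempty ↔ ∃ x ∈ U, T^[m] x ∈ V := by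
  constructor
  · rintro ⟨y, ⟨x, hx, rfl⟩, hy⟩; exact ⟨x, hx, hy⟩
  · rintro ⟨x, hx, hv⟩; exact ⟨T^[m] x, ⟨x, hx, rfl⟩, hv⟩

private lemma prod_iterate (T : X → X) : ∀ (n : ℕ) (p : X × X),
    (fun p : X × X => (T p.1, T p.2))^[n] p = (T^[n] p.1, T^[n] p.2) := by
  intro n
  induction n with
  | zero => intro p; simp
  | succ n ih =>
      intro p
      rw [Function.iterate_succ_apply, Function.iterate_succ_apply,
        Function.iterate_succ_apply]
      exact ih _

private lemma pair_hit (T : X → X)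
    (H : ∀ U V : Set (X × X), IsOpen U → IsOpen V → U.Nonempty → V.Nonempty →
      ∃ n : ℕ, ((fun p : X × X => (T p.1, T p.2))^[n] '' U ∩ V).Nonempty)
    (A B C D : Set X) (hA : IsOpen A) (hB : IsOpen B) (hC : IsOpen C) (hD : IsOpen D)
    (hAne : A.Nonempty) (hBne : B.Nonempty) (hCne : C.Nonempty) (hDne : D.Nonempty) :
    ∃ m : ℕ, (∃ x ∈ A, T^[m] x ∈ B) ∧ ∃ y ∈ C, T^[m] y ∈ D := by
  obtain ⟨n, y, ⟨p, hp, rfl⟩, hpv⟩ :=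
    H (A ×ˢ C) (B ×ˢ D) (hA.prod hC) (hB.prod hD) (hAne.prod hCne) (hBne.prod hDne)
  rw [prod_iterate] at hpv
  exact ⟨n, ⟨p.1, hp.1, hpv.1⟩, ⟨p.2, hp.2, hpv.2⟩⟩

/-- From weak mixing (pair hitting), the image of `T` meets every nonempty open set. -/
private lemma dense_image (T : X → X)
    (H : ∀ U V : Set (X × X), IsOpen U → IsOpen V → U.Nonempty → V.Nonempty →
      ∃ n : ℕ, ((fun p : X × X => (T p.1, T p.2))^[n] '' U ∩ V).Nonempty)
    (V : Set X) (hV : IsOpen V) (hVne : V.Nonempty) :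
    ∃ x, T x ∈ V := by
  by_contra hcon
  push_neg at hcon
  have key : ∀ (m : ℕ) (x : X), T^[m + 1] x ∉ V := by
    intro m x
    rw [Function.iterate_succ_apply']
    exact hcon _
  by_cases h2 : ∃ y ∈ V, ∃ z ∈ V, y ≠ z
  · obtain ⟨y, hy, z, hz, hyz⟩ := h2
    obtain ⟨U1, U2, hU1, hU2, hyU1, hzU2, hdisj⟩ := t2_separation hyz
    obtain ⟨m, ⟨x, hx1, hx2⟩, -⟩ :=
      pair_hit T H (V ∩ U1) (V ∩ U2) (V ∩ U2) (V ∩ U1)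
        (hV.inter hU1) (hV.inter hU2) (hV.inter hU2) (hV.inter hU1)
        ⟨y, hy, hyU1⟩ ⟨z, hz, hzU2⟩ ⟨z, hz, hzU2⟩ ⟨y, hy, hyU1⟩
    match m with
    | 0 =>
        simp only [Function.iterate_zero, id_eq] at hx2
        exact (Set.disjoint_left.mp hdisj hx1.2 hx2.2)
    | m + 1 => exact key m x hx2.1
  · push_neg at h2
    obtain ⟨x, hx⟩ := hVne
    by_cases hX : ∃ z : X, z ≠ x
    · obtain ⟨z, hz⟩ := hX
      obtain ⟨m, ⟨x1, hx1V, hx1W⟩, ⟨w, hwW, hwV⟩⟩ :=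
        pair_hit T H V ({x}ᶜ) ({x}ᶜ) V hV isOpen_compl_singleton
          isOpen_compl_singleton hV ⟨x, hx⟩ ⟨z, hz⟩ ⟨z, hz⟩ ⟨x, hx⟩
      match m with
      | 0 =>
          simp only [Function.iterate_zero, id_eq] at hx1W
          exact hx1W (h2 x1 hx1V x hx)
      | m + 1 => exact key m w hwV
    · push_neg at hX
      exact hcon x (by rw [hX (T x)]; exact hx)

private lemma preimage_iter_nonempty (T : X → X) (hT : Continuous T)
    (H : ∀ U V : Set (X × X), IsOpen U → IsOpen V → U.Nonempty → V.Nonempty →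
      ∃ n : ℕ, ((fun p : X × X => (T p.1, T p.2))^[n] '' U ∩ V).Nonempty)
    (V : Set X) (hV : IsOpen V) (hVne : V.Nonempty) :
    ∀ i : ℕ, (T^[i] ⁻¹' V).Nonempty := by
  intro i
  induction i with
  | zero => simpa using hVne
  | succ i ih =>
      obtain ⟨x, hx⟩ := dense_image T H (T^[i] ⁻¹' V)
        (hV.preimage (hT.iterate i)) ih
      exact ⟨x, by rwa [Set.mem_preimage, Function.iterate_succ_apply]⟩

/-- Furstenberg refinement: the hitting-time set of a smaller pair is contained in
the intersection of the hitting-time sets of two given pairs. -/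
private lemma refine (T : X → X) (hT : Continuous T)
    (H : ∀ U V : Set (X × X), IsOpen U → IsOpen V → U.Nonempty → V.Nonempty →
      ∃ n : ℕ, ((fun p : X × X => (T p.1, T p.2))^[n] '' U ∩ V).Nonempty)
    (U1 V1 U2 V2 : Set X) (hU1 : IsOpen U1) (hV1 : IsOpen V1)
    (hU2 : IsOpen U2) (hV2 : IsOpen V2)
    (hU1n : U1.Nonempty) (hV1n : V1.Nonempty) (hU2n : U2.Nonempty) (hV2n : V2.Nonempty) :
    ∃ U' V' : Set X, IsOpen U' ∧ IsOpen V' ∧ U'.Nonempty ∧ V'.Nonempty ∧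
      ∀ m : ℕ, (∃ x ∈ U', T^[m] x ∈ V') →
        (∃ x ∈ U1, T^[m] x ∈ V1) ∧ (∃ x ∈ U2, T^[m] x ∈ V2) := by
  obtain ⟨n, ⟨x, hx1, hx2⟩, ⟨y, hy1, hy2⟩⟩ :=
    pair_hit T H U1 U2 V1 V2 hU1 hU2 hV1 hV2 hU1n hU2n hV1n hV2n
  refine ⟨U1 ∩ T^[n] ⁻¹' U2, V1 ∩ T^[n] ⁻¹' V2,
    hU1.inter (hU2.preimage (hT.iterate n)),
    hV1.inter (hV2.preimage (hT.iterate n)),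
    ⟨x, hx1, hx2⟩, ⟨y, hy1, hy2⟩, ?_⟩
  rintro m ⟨z, ⟨hz1, hz2⟩, hz3, hz4⟩
  refine ⟨⟨z, hz1, hz3⟩, T^[n] z, hz2, ?_⟩
  have : T^[m] (T^[n] z) = T^[n] (T^[m] z) := by
    rw [← Function.iterate_add_apply, ← Function.iterate_add_apply, Nat.add_comm]
  rw [this]
  exact hz4

end Aux

theorem weaklyMixing_iff_thick_hitting_sets
    {X : Type*} [MetricSpace X] [CompactSpace X]
    (T : X → X) (hT : Continuous T) :
    (∀ U V : Set (X × X), IsOpen U → IsOpen V → U.Nonempty → V.Nonempty →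
      ∃ n : ℕ, ((fun p : X × X => (T p.1, T p.2))^[n] '' U ∩ V).Nonempty) ↔
    (∀ U V : Set X, IsOpen U → IsOpen V → U.Nonempty → V.Nonempty →
      ∀ n : ℕ, ∃ a : ℕ, ∀ i ≤ n, (T^[a + i] '' U ∩ V).Nonempty) := by
  constructor
  · -- weak mixing ⇒ thick hitting sets
    intro H U V hU hV hUne hVne n
    -- inductively refine to a single pair whose hitting set is inside all N(U, T^[i]⁻¹ V)
    have claim : ∀ k : ℕ, ∃ U' V' : Set X, IsOpen U' ∧ IsOpen V' ∧
        U'.Nonempty ∧ V'.Nonempty ∧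
        ∀ m : ℕ, (∃ x ∈ U', T^[m] x ∈ V') →
          ∀ i ≤ k, ∃ x ∈ U, T^[m] x ∈ T^[i] ⁻¹' V := by
      intro k
      induction k with
      | zero =>
          refine ⟨U, V, hU, hV, hUne, hVne, ?_⟩
          rintro m hm i hi
          interval_cases i
          simpa using hm
      | succ k ih =>
          obtain ⟨U', V', hU', hV', hU'n, hV'n, hprop⟩ := ih
          obtain ⟨U'', V'', hU'', hV'', hU''n, hV''n, hprop2⟩ :=
            refine T hT H U' V' U (T^[k+1] ⁻¹' V) hU' hV' hU
              (hV.preimage (hT.iterate (k+1))) hU'n hV'n hUne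
              (preimage_iter_nonempty T hT H V hV hVne (k+1))
          refine ⟨U'', V'', hU'', hV'', hU''n, hV''n, ?_⟩
          intro m hm i hi
          rcases Nat.lt_or_ge i (k+1) with hik | hik
          · exact hprop m (hprop2 m hm).1 i (Nat.lt_succ_iff.mp hik)
          · have : i = k + 1 := le_antisymm hi hik
            subst this
            exact (hprop2 m hm).2
    obtain ⟨U', V', hU', hV', hU'n, hV'n, hprop⟩ := claim n
    obtain ⟨m, hm, -⟩ :=
      pair_hit T H U' V' U' V' hU' hV' hU' hV' hU'n hV'n hU'n hV'n
    refine ⟨m, fun i hi => ?_⟩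
    obtain ⟨x, hxU, hxV⟩ := hprop m hm i hi
    rw [Set.mem_preimage] at hxV
    rw [hit_iff]
    refine ⟨x, hxU, ?_⟩
    rwa [Nat.add_comm, Function.iterate_add_apply]
  · -- thick hitting sets ⇒ weak mixing
    intro H U V hU hV hUne hVne
    obtain ⟨p, hp⟩ := hUne
    obtain ⟨q, hq⟩ := hVne
    obtain ⟨A, B, hA, hB, hpA, hpB, hABU⟩ := isOpen_prod_iff.mp hU p.1 p.2 hp
    obtain ⟨C, D, hC, hD, hqC, hqD, hCDV⟩ := isOpen_prod_iff.mp hV q.1 q.2 hq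
    have hAne : A.Nonempty := ⟨p.1, hpA⟩
    have hBne : B.Nonempty := ⟨p.2, hpB⟩
    have hCne : C.Nonempty := ⟨q.1, hqC⟩
    have hDne : D.Nonempty := ⟨q.2, hqD⟩
    -- transitivity from thickness (length-0 runs)
    have trans : ∀ P Q : Set X, IsOpen P → IsOpen Q → P.Nonempty → Q.Nonempty →
        ∃ k : ℕ, ∃ x ∈ P, T^[k] x ∈ Q := by
      intro P Q hP hQ hPn hQn
      obtain ⟨a, ha⟩ := H P Q hP hQ hPn hQn 0
      have := ha 0 le_rfl
      rw [Nat.add_zero, hit_iff] at this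
      exact ⟨a, this⟩
    -- link sources: k with T^[k] (some point of A) ∈ B
    obtain ⟨k, x0, hx0A, hx0B⟩ := trans A B hA hB hAne hBne
    -- link targets: l with T^[l] (some point of C) ∈ D
    obtain ⟨l, y0, hy0C, hy0D⟩ := trans C D hC hD hCne hDne
    set A' := A ∩ T^[k] ⁻¹' B with hA'def
    set C' := C ∩ T^[l] ⁻¹' D with hC'def
    have hA' : IsOpen A' := hA.inter (hB.preimage (hT.iterate k))
    have hC' : IsOpen C' := hC.inter (hD.preimage (hT.iterate l))
    have hA'n : A'.Nonempty := ⟨x0, hx0A, hx0B⟩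
    have hC'n : C'.Nonempty := ⟨y0, hy0C, hy0D⟩
    obtain ⟨a, ha⟩ := H A' C' hA' hC' hA'n hC'n (k + l)
    -- find m with (∃ x ∈ A, T^[m] x ∈ C) ∧ (∃ y ∈ B, T^[m] y ∈ D)
    have main : ∃ m : ℕ, (∃ x ∈ A, T^[m] x ∈ C) ∧ ∃ y ∈ B, T^[m] y ∈ D := by
      rcases Nat.le_total k l with hkl | hlk
      · -- case k ≤ l, use m = a + (l - k)
        set d := l - k with hd
        have hdk : d + k = l := Nat.sub_add_cancel hkl
        obtain ⟨x', hx'A', hx'C'⟩ := (hit_iff T (a + d) A' C').mp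
          (ha d (le_trans (Nat.sub_le l k) (Nat.le_add_left l k)))
        obtain ⟨x, hxA', hxC'⟩ := (hit_iff T (a + 0) A' C').mp (ha 0 (Nat.zero_le _))
        rw [Nat.add_zero] at hxC'
        refine ⟨a + d, ⟨x', hx'A'.1, hx'C'.1⟩, T^[k] x, hxA'.2, ?_⟩
        have : T^[a + d] (T^[k] x) = T^[l] (T^[a] x) := by
          rw [← Function.iterate_add_apply, ← Function.iterate_add_apply]
          congr 1
          omega
        rw [this]
        exact hxC'.2
      · -- case l ≤ k, use m = a
        set d := k - l with hd
        have hdl : d + l = k := Nat.sub_add_cancel hlk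
        obtain ⟨x', hx'A', hx'C'⟩ := (hit_iff T (a + d) A' C').mp
          (ha d (le_trans (Nat.sub_le k l) (Nat.le_add_right k l)))
        obtain ⟨x, hxA', hxC'⟩ := (hit_iff T (a + 0) A' C').mp (ha 0 (Nat.zero_le _))
        rw [Nat.add_zero] at hxC'
        refine ⟨a, ⟨x, hxA'.1, hxC'.1⟩, T^[k] x', hx'A'.2, ?_⟩
        have : T^[a] (T^[k] x') = T^[l] (T^[a + d] x') := by
          rw [← Function.iterate_add_apply, ← Function.iterate_add_apply]
          congr 1
          omega
        rw [this]
        exact hx'C'.2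
    obtain ⟨m, ⟨x, hxA, hxC⟩, ⟨y, hyB, hyD⟩⟩ := main
    refine ⟨m, (T^[m] x, T^[m] y), ⟨(x, y), hABU ⟨hxA, hyB⟩, ?_⟩, hCDV ⟨hxC, hyD⟩⟩
    rw [prod_iterate]
end

section
/- (Furstenberg intersection lemma) If a dynamical system (X,T) on a compact metric space is weakly mixing, then for any k ≥ 1 and any non-empty open subsets U_1,…,U_k, V_1,…,V_k of X one has ⋂_{i=1}^k N(U_i, V_i) ≠ ∅, where N(U,V) = {n ∈ ℕ : T^n U ∩ V ≠ ∅}. -/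
private lemma pair_iterate {X : Type*} (T : X → X) (n : ℕ) (p : X × X) :
    (fun p : X × X => (T p.1, T p.2))^[n] p = (T^[n] p.1, T^[n] p.2) := by
  induction n generalizing p with
  | zero => simp
  | succ n ih => simp [Function.iterate_succ_apply, ih]

private lemma combine {X : Type*} [MetricSpace X] [CompactSpace X]
    (T : X → X) (hT : Continuous T)
    (hwm : ∀ U V : Set (X × X), IsOpen U → IsOpen V → U.Nonempty → V.Nonempty →
      ∃ n : ℕ, ((fun p : X × X => (T p.1, T p.2))^[n] '' U ∩ V).Nonempty)
    (U₁ U₂ V₁ V₂ : Set X) (hU₁ : IsOpen U₁) (hU₂ : IsOpen U₂)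
    (hV₁ : IsOpen V₁) (hV₂ : IsOpen V₂)
    (hU₁n : U₁.Nonempty) (hU₂n : U₂.Nonempty)
    (hV₁n : V₁.Nonempty) (hV₂n : V₂.Nonempty) :
    ∃ U V : Set X, IsOpen U ∧ IsOpen V ∧ U.Nonempty ∧ V.Nonempty ∧
      ∀ n : ℕ, (T^[n] '' U ∩ V).Nonempty →
        (T^[n] '' U₁ ∩ V₁).Nonempty ∧ (T^[n] '' U₂ ∩ V₂).Nonempty := by
  obtain ⟨m, q, ⟨p, hp, hpq⟩, hq⟩ := hwm (U₁ ×ˢ V₁) (U₂ ×ˢ V₂)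
    (hU₁.prod hV₁) (hU₂.prod hV₂) (hU₁n.prod hV₁n) (hU₂n.prod hV₂n)
  rw [pair_iterate] at hpq
  subst hpq
  refine ⟨U₁ ∩ T^[m] ⁻¹' U₂, V₁ ∩ T^[m] ⁻¹' V₂,
    hU₁.inter (hU₂.preimage (hT.iterate m)),
    hV₁.inter (hV₂.preimage (hT.iterate m)),
    ⟨p.1, hp.1, hq.1⟩, ⟨p.2, hp.2, hq.2⟩, ?_⟩
  rintro n ⟨y, ⟨x, ⟨hx₁, hx₂⟩, rfl⟩, hy₁, hy₂⟩
  refine ⟨⟨T^[n] x, ⟨x, hx₁, rfl⟩, hy₁⟩, ⟨T^[n] (T^[m] x), ⟨T^[m] x, hx₂, rfl⟩, ?_⟩⟩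
  have : T^[n] (T^[m] x) = T^[m] (T^[n] x) := by
    rw [← Function.iterate_add_apply, ← Function.iterate_add_apply, Nat.add_comm]
  rw [this]
  exact hy₂

private lemma key {X : Type*} [MetricSpace X] [CompactSpace X]
    (T : X → X) (hT : Continuous T)
    (hwm : ∀ U V : Set (X × X), IsOpen U → IsOpen V → U.Nonempty → V.Nonempty →
      ∃ n : ℕ, ((fun p : X × X => (T p.1, T p.2))^[n] '' U ∩ V).Nonempty)
    (k : ℕ) (hk : 1 ≤ k) (U V : Fin k → Set X)
    (hU : ∀ i, IsOpen (U i)) (hV : ∀ i, IsOpen (V i))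
    (hUne : ∀ i, (U i).Nonempty) (hVne : ∀ i, (V i).Nonempty) :
    ∃ U' V' : Set X, IsOpen U' ∧ IsOpen V' ∧ U'.Nonempty ∧ V'.Nonempty ∧
      ∀ n : ℕ, (T^[n] '' U' ∩ V').Nonempty →
        ∀ i, (T^[n] '' U i ∩ V i).Nonempty := by
  induction k with
  | zero => omega
  | succ k ih =>
    rcases Nat.eq_or_lt_of_le hk with h1 | h1
    · refine ⟨U 0, V 0, hU 0, hV 0, hUne 0, hVne 0, fun n hn i => ?_⟩
      have : i = 0 := by omega
      rwa [this]
    · have hk' : 1 ≤ k := by omega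
      obtain ⟨U', V', hoU, hoV, hnU, hnV, hmain⟩ :=
        ih hk' (U ∘ Fin.castSucc) (V ∘ Fin.castSucc)
          (fun i => hU _) (fun i => hV _) (fun i => hUne _) (fun i => hVne _)
      obtain ⟨U'', V'', hoU', hoV', hnU', hnV', hmain'⟩ :=
        combine T hT hwm U' (U (Fin.last k)) V' (V (Fin.last k))
          hoU (hU _) hoV (hV _) hnU (hUne _) hnV (hVne _)
      refine ⟨U'', V'', hoU', hoV', hnU', hnV', fun n hn i => ?_⟩
      obtain ⟨h₁, h₂⟩ := hmain' n hn
      induction i using Fin.lastCases with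
      | last => exact h₂
      | cast j => exact hmain n h₁ j

theorem furstenberg_intersection_lemma
    {X : Type*} [MetricSpace X] [CompactSpace X]
    (T : X → X) (hT : Continuous T)
    (hwm : ∀ U V : Set (X × X), IsOpen U → IsOpen V → U.Nonempty → V.Nonempty →
      ∃ n : ℕ, ((fun p : X × X => (T p.1, T p.2))^[n] '' U ∩ V).Nonempty)
    (k : ℕ) (hk : 1 ≤ k) (U V : Fin k → Set X)
    (hU : ∀ i, IsOpen (U i)) (hV : ∀ i, IsOpen (V i))
    (hUne : ∀ i, (U i).Nonempty) (hVne : ∀ i, (V i).Nonempty) :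
    (⋂ i : Fin k, {n : ℕ | (T^[n] '' U i ∩ V i).Nonempty}).Nonempty := by
  obtain ⟨U', V', hoU, hoV, hnU, hnV, hmain⟩ :=
    key T hT hwm k hk U V hU hV hUne hVne
  obtain ⟨n, q, ⟨p, hp, hpq⟩, hq⟩ := hwm (U' ×ˢ U') (V' ×ˢ V')
    (hoU.prod hoU) (hoV.prod hoV) (hnU.prod hnU) (hnV.prod hnV)
  rw [pair_iterate] at hpq
  subst hpq
  exact ⟨n, Set.mem_iInter.2 fun i =>
    hmain n ⟨T^[n] p.1, ⟨p.1, hp.1, rfl⟩, hq.1⟩ i⟩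
end

section
/- Let (X,T) be a dynamical system on a compact metric space. If (X,T) is topologically transitive and has a dense set of periodic points and X is infinite, then (X,T) is sensitive: there exists δ > 0 such that for every x ∈ X and every ε > 0 there exist y with d(x,y) < ε and n ∈ ℕ with d(T^n x, T^n y) > δ. -/
/-- For a periodic point, iterates reduce mod the period. -/
lemma banks_iter_mod {X : Type*} (T : X → X) {k : ℕ} {p : X}
    (hp : T^[k] p = p) (s : ℕ) : T^[s] p = T^[s % k] p := by
  conv_lhs => rw [← Nat.mod_add_div s k]
  rw [Function.iterate_add_apply, Function.iterate_mul, Function.iterate_fixed hp]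

theorem banks_devaney_sensitive
    {X : Type*} [MetricSpace X] [CompactSpace X]
    (T : X → X) (hT : Continuous T)
    (htrans : ∀ U V : Set X, IsOpen U → IsOpen V → U.Nonempty → V.Nonempty →
      ∃ n : ℕ, (T^[n] '' U ∩ V).Nonempty)
    (hper : Dense {p : X | ∃ k : ℕ, 1 ≤ k ∧ T^[k] p = p})
    (hinf : (Set.univ : Set X).Infinite) :
    ∃ δ > 0, ∀ x : X, ∀ ε > 0, ∃ y : X, dist x y < ε ∧
      ∃ n : ℕ, dist (T^[n] x) (T^[n] y) > δ := by
  classical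
  have hXne : Nonempty X := hinf.nonempty.to_subtype.map (fun a => a.1)
  -- obtain a first periodic point p with period k
  obtain ⟨p, k, hk1, hpk⟩ : ∃ p, ∃ k : ℕ, 1 ≤ k ∧ T^[k] p = p := by
    obtain ⟨p, hp⟩ := hper.nonempty
    exact ⟨p, hp⟩
  -- its orbit as a finset
  set A : Finset X := (Finset.range k).image (fun i => T^[i] p) with hA
  have hAmem : ∀ i : ℕ, T^[i] p ∈ A := by
    intro i
    rw [banks_iter_mod T hpk i]
    exact Finset.mem_image.2 ⟨i % k, Finset.mem_range.2 (Nat.mod_lt _ hk1), rfl⟩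
  -- a second periodic point q outside the orbit of p
  have hopen : IsOpen ((↑A : Set X)ᶜ) := A.finite_toSet.isClosed.isOpen_compl
  have hone : ((↑A : Set X)ᶜ).Nonempty := by
    have : ((Set.univ : Set X) \ ↑A).Infinite := hinf.diff A.finite_toSet
    obtain ⟨q, hq⟩ := this.nonempty
    exact ⟨q, hq.2⟩
  obtain ⟨q, hqA, l, hl1, hql⟩ :
      ∃ q, q ∉ (↑A : Set X) ∧ ∃ l : ℕ, 1 ≤ l ∧ T^[l] q = q := by
    obtain ⟨q, hq1, hq2⟩ := hper.exists_mem_open hopen hone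
    exact ⟨q, hq2, hq1⟩
  set B : Finset X := (Finset.range l).image (fun i => T^[i] q) with hB
  have hBmem : ∀ i : ℕ, T^[i] q ∈ B := by
    intro i
    rw [banks_iter_mod T hql i]
    exact Finset.mem_image.2 ⟨i % l, Finset.mem_range.2 (Nat.mod_lt _ hl1), rfl⟩
  -- the orbits are disjoint
  have hdisj : ∀ a ∈ A, ∀ b ∈ B, a ≠ b := by
    rintro a ha b hb rfl
    obtain ⟨i, hi, rfl⟩ := Finset.mem_image.1 ha
    obtain ⟨j, hj, hij⟩ := Finset.mem_image.1 hb
    apply hqA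
    have hj' : j ≤ l := le_of_lt (Finset.mem_range.1 hj)
    have : T^[l - j] (T^[j] q) = q := by
      rw [← Function.iterate_add_apply, Nat.sub_add_cancel hj', hql]
    rw [← this, hij, ← Function.iterate_add_apply]
    exact Finset.mem_coe.2 (hAmem _)
  -- the minimal distance between the two orbits
  have hABne : (A ×ˢ B).Nonempty := by
    exact ⟨(p, q), Finset.mk_mem_product (hAmem 0) (hBmem 0)⟩
  set δ0 : ℝ := (A ×ˢ B).inf' hABne (fun ab => dist ab.1 ab.2) with hδ0
  have hδ0pos : 0 < δ0 := by
    rw [hδ0]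
    refine (Finset.lt_inf'_iff hABne).2 ?_
    rintro ⟨a, b⟩ hab
    obtain ⟨ha, hb⟩ := Finset.mem_product.1 hab
    exact dist_pos.2 (hdisj a ha b hb)
  have hδ0le : ∀ a ∈ A, ∀ b ∈ B, δ0 ≤ dist a b := by
    intro a ha b hb
    have hmem : (a, b) ∈ A ×ˢ B := by rw [Finset.mem_product]; exact ⟨ha, hb⟩
    exact Finset.inf'_le _ hmem
  refine ⟨δ0 / 8, by linarith, ?_⟩
  intro x ε hε
  set δ : ℝ := δ0 / 8 with hδdef
  set ε0 : ℝ := min ε δ with hε0def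
  have hε0 : 0 < ε0 := lt_min hε (by rw [hδdef]; linarith)
  have hε0ε : ε0 ≤ ε := min_le_left _ _
  have hε0δ : ε0 ≤ δ := min_le_right _ _
  -- one of the two orbits is far from x
  have key : (∀ i : ℕ, δ0 / 2 ≤ dist x (T^[i] p)) ∨
      (∀ i : ℕ, δ0 / 2 ≤ dist x (T^[i] q)) := by
    by_contra h
    push_neg at h
    obtain ⟨⟨i, hi⟩, ⟨j, hj⟩⟩ := h
    have h1 := hδ0le _ (hAmem i) _ (hBmem j)
    have h2 := dist_triangle (T^[i] p) x (T^[j] q)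
    rw [dist_comm (T^[i] p) x] at h2
    linarith
  obtain ⟨w, kw, hkw1, hwper, hfar⟩ :
      ∃ w, ∃ kw : ℕ, 1 ≤ kw ∧ T^[kw] w = w ∧ ∀ i : ℕ, δ0 / 2 ≤ dist x (T^[i] w) := by
    rcases key with h | h
    · exact ⟨p, k, hk1, hpk, h⟩
    · exact ⟨q, l, hl1, hql, h⟩
  -- a periodic point pp near x
  obtain ⟨pp, ⟨m, hm1, hmper⟩, hppx⟩ :
      ∃ pp, (∃ m : ℕ, 1 ≤ m ∧ T^[m] pp = pp) ∧ dist x pp < ε0 := by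
    obtain ⟨pp, hpp1, hpp2⟩ := Metric.dense_iff.1 hper x ε0 hε0
    exact ⟨pp, hpp2, by simpa [dist_comm] using Metric.mem_ball.1 hpp1⟩
  -- the target open set
  set V : Set X := ⋂ i ∈ Finset.range (m + 1), T^[i] ⁻¹' Metric.ball (T^[i] w) δ with hV
  have hVopen : IsOpen V :=
    isOpen_biInter_finset fun i _ => (Metric.isOpen_ball).preimage (hT.iterate i)
  have hVne : V.Nonempty := by
    refine ⟨w, ?_⟩
    rw [hV]
    refine Set.mem_iInter₂.2 fun i _ => ?_
    exact Metric.mem_ball_self (by rw [hδdef]; linarith)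
  obtain ⟨n, v, ⟨z, hzU, hvz⟩, hvV⟩ :=
    htrans (Metric.ball x ε0) V Metric.isOpen_ball hVopen
      ⟨x, Metric.mem_ball_self hε0⟩ hVne
  -- the synchronizing time N
  have hmod := Nat.mod_add_div n m
  have hmodlt : n % m < m := Nat.mod_lt _ hm1
  set r : ℕ := m - n % m with hr
  have hr1 : 1 ≤ r := by omega
  have hrm : r ≤ m := by omega
  set N : ℕ := n + r with hNdef
  have hNmul : N = m * (n / m + 1) := by rw [Nat.mul_succ]; omega
  have hNpp : T^[N] pp = pp := by
    rw [hNmul, Function.iterate_mul, Function.iterate_fixed hmper]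
  have hNz : T^[N] z = T^[r] (T^[n] z) := by
    rw [hNdef, Nat.add_comm n r, Function.iterate_add_apply]
  -- T^[N] z is δ-close to T^[r] w
  have hzball : dist (T^[N] z) (T^[r] w) < δ := by
    have hvz' : T^[n] z ∈ V := by rw [hvz]; exact hvV
    rw [hV] at hvz'
    have := Set.mem_iInter₂.1 hvz' r (Finset.mem_range.2 (by omega))
    rw [hNz]
    exact Metric.mem_ball.1 this
  have hfar' : δ0 / 2 ≤ dist x (T^[r] w) := hfar r
  -- dist pp (T^[N] z) > 2δ
  have hsep : 2 * δ > δ := by rw [hδdef]; linarith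
  have hppz : dist pp (T^[N] z) > 2 * δ := by
    have h1 := dist_triangle x pp (T^[r] w)
    have h2 := dist_triangle pp (T^[N] z) (T^[r] w)
    have : dist x pp < δ := lt_of_lt_of_le hppx hε0δ
    rw [hδdef] at *
    linarith
  -- conclude
  by_cases hcase : dist (T^[N] x) (T^[N] pp) > δ
  · exact ⟨pp, lt_of_lt_of_le hppx hε0ε, N, hcase⟩
  · push_neg at hcase
    refine ⟨z, ?_, N, ?_⟩
    · have : dist z x < ε0 := Metric.mem_ball.1 hzU
      rw [dist_comm] at this
      exact lt_of_lt_of_le this hε0ε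
    · have h1 := dist_triangle pp (T^[N] x) (T^[N] z)
      rw [hNpp] at hcase
      rw [dist_comm pp (T^[N] x)] at h1
      rw [dist_comm (T^[N] x) pp] at hcase
      have hc : dist (T^[N] x) pp = dist pp (T^[N] x) := dist_comm _ _
      linarith
end

section
/- Let (X,T) be a minimal dynamical system on a compact metric space. Then (X,T) is either equicontinuous (the family {T^n : n ≥ 0} is uniformly equicontinuous) or sensitive (there exists δ > 0 such that every non-empty open set contains two points whose orbits are separated by more than δ at some time). -/
open Metric Set

theorem minimal_equicontinuous_or_sensitive
    {X : Type*} [MetricSpace X] [CompactSpace X]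
    (T : X → X) (hT : Continuous T)
    (hmin : ∀ x : X, Dense {y : X | ∃ n : ℕ, y = T^[n] x}) :
    (∀ ε > 0, ∃ δ > 0, ∀ x y : X, dist x y < δ → ∀ n : ℕ, dist (T^[n] x) (T^[n] y) < ε) ∨
    (∃ δ > 0, ∀ x : X, ∀ ε > 0, ∃ y : X, dist x y < ε ∧
      ∃ n : ℕ, dist (T^[n] x) (T^[n] y) > δ) := by
  by_cases hs : (∃ δ > 0, ∀ x : X, ∀ ε > 0, ∃ y : X, dist x y < ε ∧
      ∃ n : ℕ, dist (T^[n] x) (T^[n] y) > δ)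
  · exact Or.inr hs
  left
  push_neg at hs
  -- uniform control of finitely many iterates near a point
  have hiter : ∀ (m : ℕ) (x : X) (c : ℝ), 0 < c → ∃ ρ > 0, ∀ y, dist x y < ρ →
      ∀ k ≤ m, dist (T^[k] x) (T^[k] y) < c := by
    intro m x c hc
    induction m with
    | zero =>
      exact ⟨c, hc, fun y hy k hk => by
        simpa [Nat.le_zero.mp hk, dist_comm] using hy⟩
    | succ m ih =>
      obtain ⟨ρ, hρ, hρ'⟩ := ih
      have hcont : Continuous (T^[m+1]) := hT.iterate _
      obtain ⟨ρ', hρ'pos, hball⟩ := Metric.continuous_iff.mp hcont x c hc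
      refine ⟨min ρ ρ', lt_min hρ hρ'pos, fun y hy k hk => ?_⟩
      by_cases hk' : k ≤ m
      · exact hρ' y (hy.trans_le (min_le_left _ _)) k hk'
      · have : k = m + 1 := by omega
        subst this
        have := hball y (by rw [dist_comm]; exact hy.trans_le (min_le_right _ _))
        rwa [dist_comm] at this
  -- pointwise equicontinuity with uniform bound
  have point : ∀ c : ℝ, 0 < c → ∀ x : X, ∃ ρ > 0, ∀ y, dist x y < ρ →
      ∀ n : ℕ, dist (T^[n] x) (T^[n] y) ≤ c := by
    intro c hc x
    obtain ⟨x₀, η, hη, hx₀⟩ := hs (c/4) (by positivity)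
    have hηh : (0:ℝ) < η/2 := by positivity
    obtain ⟨y₀, ⟨m, rfl⟩, hym⟩ := (hmin x).exists_mem_open isOpen_ball
      ⟨x₀, mem_ball_self hηh⟩
    rw [mem_ball] at hym
    have hminc : (0:ℝ) < min (η/2) (c/2) := lt_min hηh (by positivity)
    obtain ⟨ρ, hρ, hρ'⟩ := hiter m x (min (η/2) (c/2)) hminc
    refine ⟨ρ, hρ, fun y hy n => ?_⟩
    by_cases hn : n ≤ m
    · have := hρ' y hy n hn
      have := min_le_right (η/2) (c/2)
      linarith
    · obtain ⟨j, rfl⟩ : ∃ j, n = j + m := ⟨n - m, by omega⟩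
      rw [Function.iterate_add_apply, Function.iterate_add_apply]
      have hm := hρ' y hy m le_rfl
      have hm2 : dist (T^[m] x) (T^[m] y) < η/2 :=
        hm.trans_le (min_le_left _ _)
      have h0 : dist x₀ (T^[m] x) < η/2 := by rw [dist_comm]; linarith
      have h1 : dist x₀ (T^[m] x) < η := by linarith
      have h2 : dist x₀ (T^[m] y) < η :=
        (dist_triangle x₀ (T^[m] x) (T^[m] y)).trans_lt (by linarith)
      have ha := hx₀ (T^[m] x) h1 j
      have hb := hx₀ (T^[m] y) h2 j
      calc dist (T^[j] (T^[m] x)) (T^[j] (T^[m] y))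
          ≤ dist (T^[j] (T^[m] x)) (T^[j] x₀) + dist (T^[j] x₀) (T^[j] (T^[m] y)) :=
            dist_triangle _ _ _
        _ ≤ c/4 + c/4 := by rw [dist_comm]; exact add_le_add ha hb
        _ ≤ c := by linarith
  -- compactness: uniformize
  intro ε hε
  have hεp : (0:ℝ) < ε/3 := by linarith
  choose ρ hρpos hρ using point (ε/3) hεp
  obtain ⟨s, hscov⟩ := isCompact_univ.elim_finite_subcover
    (fun x : X => ball x (ρ x / 2)) (fun x => isOpen_ball)
    (fun x _ => mem_iUnion.mpr ⟨x, mem_ball_self (half_pos (hρpos x))⟩)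
  by_cases hse : s.Nonempty
  · refine ⟨s.inf' hse (fun x => ρ x / 2),
      (Finset.lt_inf'_iff hse).mpr fun x _ => half_pos (hρpos x),
      fun x y hxy n => ?_⟩
    obtain ⟨i, hi, hxi⟩ := mem_iUnion₂.mp (hscov (mem_univ x))
    rw [mem_ball] at hxi
    have hδi : s.inf' hse (fun x => ρ x / 2) ≤ ρ i / 2 := Finset.inf'_le _ hi
    have hρi := hρpos i
    have h1 : dist i x < ρ i := by rw [dist_comm]; linarith
    have h2 : dist i y < ρ i :=
      (dist_triangle i x y).trans_lt (by rw [dist_comm x i] at hxi; linarith)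
    have ha := hρ i x h1 n
    have hb := hρ i y h2 n
    calc dist (T^[n] x) (T^[n] y)
        ≤ dist (T^[n] x) (T^[n] i) + dist (T^[n] i) (T^[n] y) := dist_triangle _ _ _
      _ ≤ ε/3 + ε/3 := by rw [dist_comm]; exact add_le_add ha hb
      _ < ε := by linarith
  · refine ⟨1, one_pos, fun x y _ n => absurd (hscov (mem_univ x)) ?_⟩
    simp [Finset.not_nonempty_iff_eq_empty.mp hse]
end

section
/- Let (X,T) be a transitive dynamical system on a compact metric space. If some point of X is an equicontinuity point, then the set of equicontinuity points coincides with the set of transitive points; otherwise (X,T) is sensitive. -/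
open Metric Set TopologicalSpace

/-- Equicontinuity of the finite family `T^[k]`, `k ≤ N`, via compactness. -/
lemma aux_finite_unif {X : Type*} [MetricSpace X] [CompactSpace X]
    (T : X → X) (hT : Continuous T) (N : ℕ) (ε : ℝ) (hε : 0 < ε) :
    ∃ η > 0, ∀ a b : X, dist a b < η → ∀ k ≤ N, dist (T^[k] a) (T^[k] b) < ε := by
  induction N with
  | zero =>
    refine ⟨ε, hε, fun a b h k hk => ?_⟩
    have : k = 0 := Nat.le_zero.mp hk
    simpa [this] using h
  | succ N ih =>
    obtain ⟨η₁, hη₁, H1⟩ := ih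
    have hu := CompactSpace.uniformContinuous_of_continuous (hT.iterate (N + 1))
    rw [Metric.uniformContinuous_iff] at hu
    obtain ⟨η₂, hη₂, H2⟩ := hu ε hε
    refine ⟨min η₁ η₂, lt_min hη₁ hη₂, fun a b h k hk => ?_⟩
    rcases hk.lt_or_eq with h' | rfl
    · exact H1 a b (h.trans_le (min_le_left _ _)) k (Nat.lt_succ_iff.mp h')
    · exact H2 (h.trans_le (min_le_right _ _))

/-- The open "uniform ε-stability" set. -/
def ASet {X : Type*} [MetricSpace X] (T : X → X) (ε : ℝ) : Set X :=
  {x | ∃ δ > 0, ∀ y z : X, dist x y < δ → dist x z < δ →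
    ∀ n : ℕ, dist (T^[n] y) (T^[n] z) ≤ ε}

lemma ASet_open {X : Type*} [MetricSpace X] (T : X → X) (ε : ℝ) :
    IsOpen (ASet T ε) := by
  rw [Metric.isOpen_iff]
  rintro x ⟨δ, hδ, H⟩
  refine ⟨δ / 2, by positivity, fun x' hx' => ?_⟩
  rw [Metric.mem_ball] at hx'
  refine ⟨δ / 2, by positivity, fun y z hy hz n => H y z ?_ ?_ n⟩
  · have := dist_triangle x x' y
    rw [dist_comm x' x] at hx'
    linarith
  · have := dist_triangle x x' z
    rw [dist_comm x' x] at hx'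
    linarith

lemma ASet_dense {X : Type*} [MetricSpace X] [CompactSpace X]
    (T : X → X) (hT : Continuous T)
    (htrans : ∀ U V : Set X, IsOpen U → IsOpen V → U.Nonempty → V.Nonempty →
      ∃ n : ℕ, (T^[n] '' U ∩ V).Nonempty)
    {ε : ℝ} (hε : 0 < ε) (hne : (ASet T ε).Nonempty) : Dense (ASet T ε) := by
  obtain ⟨x₀, δ₀, hδ₀, H0⟩ := hne
  rw [Metric.dense_iff]
  intro u r hr
  obtain ⟨n, p, hp1, hp2⟩ := htrans (ball u r) (ball x₀ δ₀) isOpen_ball isOpen_ball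
    ⟨u, mem_ball_self hr⟩ ⟨x₀, mem_ball_self hδ₀⟩
  obtain ⟨w, hwU, rfl⟩ := hp1
  rw [Metric.mem_ball] at hp2
  have hρ : 0 < δ₀ - dist (T^[n] w) x₀ := by linarith
  obtain ⟨η₁, hη₁, Hc⟩ := Metric.continuous_iff.mp (hT.iterate n) w _ hρ
  obtain ⟨η₂, hη₂, Hf⟩ := aux_finite_unif T hT n ε hε
  refine ⟨w, hwU, min η₁ (η₂ / 2), lt_min hη₁ (by positivity), fun y z hy hz m => ?_⟩
  have key : ∀ a : X, dist w a < min η₁ (η₂ / 2) → dist x₀ (T^[n] a) < δ₀ := by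
    intro a ha
    have h1 := Hc a (by rw [dist_comm]; exact ha.trans_le (min_le_left _ _))
    have h2 := dist_triangle x₀ (T^[n] w) (T^[n] a)
    have h3 : dist x₀ (T^[n] w) = dist (T^[n] w) x₀ := dist_comm _ _
    have h4 : dist (T^[n] w) (T^[n] a) = dist (T^[n] a) (T^[n] w) := dist_comm _ _
    linarith
  rcases lt_or_ge m n with hm | hm
  · have hyz : dist y z < η₂ := by
      have t1 := dist_triangle y w z
      have t2 : dist y w = dist w y := dist_comm _ _
      have t3 := hy.trans_le (min_le_right _ _)
      have t4 := hz.trans_le (min_le_right _ _)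
      linarith
    exact (Hf y z hyz m hm.le).le
  · obtain ⟨j, rfl⟩ := Nat.exists_eq_add_of_le hm
    have e1 : T^[n + j] y = T^[j] (T^[n] y) := by
      rw [Nat.add_comm]; exact Function.iterate_add_apply T j n y
    have e2 : T^[n + j] z = T^[j] (T^[n] z) := by
      rw [Nat.add_comm]; exact Function.iterate_add_apply T j n z
    rw [e1, e2]
    exact H0 (T^[n] y) (T^[n] z) (key y hy) (key z hz) j

lemma eq_point_of_ASets {X : Type*} [MetricSpace X] [CompactSpace X]
    (T : X → X) (hT : Continuous T)
    (htrans : ∀ U V : Set X, IsOpen U → IsOpen V → U.Nonempty → V.Nonempty →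
      ∃ n : ℕ, (T^[n] '' U ∩ V).Nonempty)
    (h : ∀ ε > 0, (ASet T ε).Nonempty) :
    ∃ x : X, ∀ ε > 0, ∃ δ > 0, ∀ y : X, dist x y < δ →
      ∀ n : ℕ, dist (T^[n] x) (T^[n] y) < ε := by
  have hd : ∀ k : ℕ, Dense (ASet T (1 / ((k : ℝ) + 1))) := fun k =>
    ASet_dense T hT htrans (by positivity) (h _ (by positivity))
  have hD : Dense (⋂ k : ℕ, ASet T (1 / ((k : ℝ) + 1))) :=
    dense_iInter_of_isOpen (fun k => ASet_open T _) hd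
  obtain ⟨x₁, _⟩ := h 1 one_pos
  haveI : Nonempty X := ⟨x₁⟩
  obtain ⟨x, hx⟩ := hD.nonempty
  refine ⟨x, fun ε hε => ?_⟩
  obtain ⟨k, hk⟩ := exists_nat_one_div_lt hε
  obtain ⟨δ, hδ, H⟩ := Set.mem_iInter.mp hx k
  exact ⟨δ, hδ, fun y hy n =>
    lt_of_le_of_lt (H x y (by simpa using hδ) hy n) hk⟩

lemma aux_trans_dense {X : Type*} [MetricSpace X] [CompactSpace X] [Nonempty X]
    (T : X → X) (hT : Continuous T)
    (htrans : ∀ U V : Set X, IsOpen U → IsOpen V → U.Nonempty → V.Nonempty →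
      ∃ n : ℕ, (T^[n] '' U ∩ V).Nonempty) :
    Dense {x : X | Dense {y : X | ∃ n : ℕ, y = T^[n] x}} := by
  set s := TopologicalSpace.denseSeq X with hs_def
  have hs : DenseRange s := TopologicalSpace.denseRange_denseSeq X
  set G : ℕ × ℕ → Set X := fun p =>
    ⋃ n : ℕ, T^[n] ⁻¹' ball (s p.1) (1 / ((p.2 : ℝ) + 1)) with hG_def
  have hGo : ∀ p, IsOpen (G p) := fun p =>
    isOpen_iUnion fun n => (isOpen_ball).preimage (hT.iterate n)
  have hGd : ∀ p, Dense (G p) := by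
    intro p
    rw [Metric.dense_iff]
    intro u r hr
    obtain ⟨n, q, hq1, hq2⟩ := htrans (ball u r) (ball (s p.1) (1 / ((p.2 : ℝ) + 1)))
      isOpen_ball isOpen_ball ⟨u, mem_ball_self hr⟩
      ⟨s p.1, mem_ball_self (by positivity)⟩
    obtain ⟨w, hwU, rfl⟩ := hq1
    exact ⟨w, hwU, Set.mem_iUnion.mpr ⟨n, hq2⟩⟩
  have hD : Dense (⋂ p, G p) := dense_iInter_of_isOpen hGo hGd
  refine hD.mono ?_
  intro x hx
  show Dense {y : X | ∃ n : ℕ, y = T^[n] x}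
  rw [Metric.dense_iff]
  intro z r hr
  obtain ⟨m, hm⟩ := exists_nat_one_div_lt (half_pos hr)
  obtain ⟨k, hk⟩ := hs.exists_dist_lt z (show (0:ℝ) < 1 / ((m : ℝ) + 1) by positivity)
  have hxk := Set.mem_iInter.mp hx (k, m)
  obtain ⟨n, hn⟩ := Set.mem_iUnion.mp hxk
  refine ⟨T^[n] x, ?_, n, rfl⟩
  rw [Set.mem_preimage, Metric.mem_ball] at hn
  rw [Metric.mem_ball]
  have := dist_triangle (T^[n] x) (s k) z
  rw [dist_comm (s k) z] at this
  linarith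

theorem transitive_dichotomy_equicontinuity_points
    {X : Type*} [MetricSpace X] [CompactSpace X]
    (T : X → X) (hT : Continuous T)
    (htrans : ∀ U V : Set X, IsOpen U → IsOpen V → U.Nonempty → V.Nonempty →
      ∃ n : ℕ, (T^[n] '' U ∩ V).Nonempty) :
    ((∃ x : X, ∀ ε > 0, ∃ δ > 0, ∀ y : X, dist x y < δ →
        ∀ n : ℕ, dist (T^[n] x) (T^[n] y) < ε) →
      {x : X | ∀ ε > 0, ∃ δ > 0, ∀ y : X, dist x y < δ →
        ∀ n : ℕ, dist (T^[n] x) (T^[n] y) < ε} =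
      {x : X | Dense {y : X | ∃ n : ℕ, y = T^[n] x}}) ∧
    ((¬ ∃ x : X, ∀ ε > 0, ∃ δ > 0, ∀ y : X, dist x y < δ →
        ∀ n : ℕ, dist (T^[n] x) (T^[n] y) < ε) →
      ∃ δ > 0, ∀ x : X, ∀ ε > 0, ∃ y : X, dist x y < ε ∧
        ∃ n : ℕ, dist (T^[n] x) (T^[n] y) > δ) := by
  constructor
  · rintro ⟨x₀, hx₀⟩
    haveI : Nonempty X := ⟨x₀⟩
    have hTD := aux_trans_dense T hT htrans
    ext x
    simp only [Set.mem_setOf_eq]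
    constructor
    · intro hx
      rw [Metric.dense_iff]
      intro z r hr
      obtain ⟨δ, hδ, H⟩ := hx (r / 2) (half_pos hr)
      obtain ⟨y, hy1, hy2⟩ := Metric.dense_iff.mp hTD x δ hδ
      rw [Metric.mem_ball] at hy1
      obtain ⟨w, hw1, hw2⟩ := Metric.dense_iff.mp hy2 z (r / 2) (half_pos hr)
      obtain ⟨n, rfl⟩ := hw2
      refine ⟨T^[n] x, ?_, n, rfl⟩
      have h1 := H y (by rw [dist_comm]; exact hy1) n
      rw [Metric.mem_ball] at hw1 ⊢
      have := dist_triangle (T^[n] x) (T^[n] y) z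
      linarith
    · intro hx ε hε
      obtain ⟨δ₀, hδ₀, H0⟩ := hx₀ (ε / 4) (by positivity)
      obtain ⟨p, hp1, hp2⟩ := Metric.dense_iff.mp hx x₀ (δ₀ / 2) (half_pos hδ₀)
      obtain ⟨m, rfl⟩ := hp2
      rw [Metric.mem_ball] at hp1
      obtain ⟨η₁, hη₁, Hc⟩ := Metric.continuous_iff.mp (hT.iterate m) x (δ₀ / 2) (half_pos hδ₀)
      obtain ⟨η₂, hη₂, Hf⟩ := aux_finite_unif T hT m ε hε
      refine ⟨min η₁ η₂, lt_min hη₁ hη₂, fun y hy n => ?_⟩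
      rcases lt_or_ge n m with hn | hn
      · exact Hf x y (hy.trans_le (min_le_right _ _)) n hn.le
      · obtain ⟨j, rfl⟩ := Nat.exists_eq_add_of_le hn
        have e1 : T^[m + j] x = T^[j] (T^[m] x) := by
          rw [Nat.add_comm]; exact Function.iterate_add_apply T j m x
        have e2 : T^[m + j] y = T^[j] (T^[m] y) := by
          rw [Nat.add_comm]; exact Function.iterate_add_apply T j m y
        rw [e1, e2]
        have hcy := Hc y (by rw [dist_comm]; exact hy.trans_le (min_le_left _ _))
        have hmx : dist x₀ (T^[m] x) < δ₀ := by
          rw [dist_comm]; linarith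
        have hmy : dist x₀ (T^[m] y) < δ₀ := by
          have t1 := dist_triangle x₀ (T^[m] x) (T^[m] y)
          have t2 : dist x₀ (T^[m] x) = dist (T^[m] x) x₀ := dist_comm _ _
          have t3 : dist (T^[m] x) (T^[m] y) = dist (T^[m] y) (T^[m] x) := dist_comm _ _
          linarith
        have h1 := H0 (T^[m] x) hmx j
        have h2 := H0 (T^[m] y) hmy j
        have := dist_triangle (T^[j] (T^[m] x)) (T^[j] x₀) (T^[j] (T^[m] y))
        rw [dist_comm (T^[j] (T^[m] x)) (T^[j] x₀)] at this
        linarith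
  · intro hno
    by_contra hcon
    push_neg at hcon
    apply hno
    apply eq_point_of_ASets T hT htrans
    intro ε hε
    obtain ⟨x, ρ, hρ, H⟩ := hcon (ε / 2) (by positivity)
    refine ⟨x, ρ, hρ, fun y z hy hz n => ?_⟩
    have h1 := H y hy n
    have h2 := H z hz n
    have := dist_triangle (T^[n] y) (T^[n] x) (T^[n] z)
    rw [dist_comm (T^[n] y) (T^[n] x)] at this
    linarith
end

section
/- (Huang–Ye equivalences, partial) Let (X,T) be a dynamical system on a compact metric space. Then (X,T) is sensitive with sensitivity constant δ if and only if the set {(x,y) ∈ X × X : limsup_{n→∞} d(T^n x, T^n y) > δ'} is dense in X × X for some δ' > 0. -/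
theorem huang_ye_sensitivity_equivalence
    {X : Type*} [MetricSpace X] [CompactSpace X]
    (T : X → X) (hT : Continuous T) :
    (∃ δ > 0, ∀ x : X, ∀ ε > 0, ∃ y : X, dist x y < ε ∧
      ∃ n : ℕ, dist (T^[n] x) (T^[n] y) > δ) ↔
    (∃ δ' > 0, Dense {p : X × X |
      Filter.limsup (fun n : ℕ => dist (T^[n] p.1) (T^[n] p.2)) Filter.atTop > δ'}) := by
  constructor
  · rintro ⟨δ, hδ, hsens⟩
    refine ⟨δ/4, by linarith, ?_⟩
    -- distance is bounded on a compact space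
    obtain ⟨C, hC⟩ : ∃ C, ∀ a b : X, dist a b ≤ C := by
      rcases Metric.isBounded_iff.mp (isCompact_univ (X := X)).isBounded with ⟨C, hC⟩
      exact ⟨C, fun a b => hC (Set.mem_univ a) (Set.mem_univ b)⟩
    have hbd : ∀ p : X × X, Filter.IsBoundedUnder (· ≤ ·) Filter.atTop
        (fun n : ℕ => dist (T^[n] p.1) (T^[n] p.2)) := fun p =>
      ⟨C, Filter.eventually_map.mpr (Filter.Eventually.of_forall fun n => hC _ _)⟩
    set A : ℕ → Set (X × X) := fun N =>
      {p : X × X | ∃ n, N ≤ n ∧ δ/2 < dist (T^[n] p.1) (T^[n] p.2)} with hA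
    have hopen : ∀ N, IsOpen (A N) := by
      intro N
      have : A N = ⋃ n ∈ {n : ℕ | N ≤ n},
          {p : X × X | δ/2 < dist (T^[n] p.1) (T^[n] p.2)} := by
        ext p; simp [hA]
      rw [this]
      refine isOpen_biUnion fun n _ => isOpen_lt continuous_const ?_
      exact (Continuous.dist ((hT.iterate n).comp continuous_fst)
        ((hT.iterate n).comp continuous_snd))
    have hdense : ∀ N, Dense (A N) := by
      intro N
      rw [Metric.dense_iff]
      rintro ⟨x, y⟩ ε hε
      -- find η such that points η-close to x stay δ-close under T^[k] for k ≤ N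
      have hev : ∀ᶠ u in nhds x, ∀ k ∈ Finset.range (N+1),
          dist (T^[k] u) (T^[k] x) < δ := by
        rw [Filter.eventually_all_finset]
        intro k _
        have hc : ContinuousAt (T^[k]) x := (hT.iterate k).continuousAt
        have := hc.tendsto
        rw [Metric.tendsto_nhds] at this
        exact this δ hδ
      rw [Metric.eventually_nhds_iff] at hev
      obtain ⟨η, hη, hηp⟩ := hev
      set η' := min η ε with hη'
      have hη'0 : 0 < η' := lt_min hη hε
      obtain ⟨x₁, hx₁, n, hn⟩ := hsens x η' hη'0
      -- n must exceed N
      have hnN : N ≤ n := by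
        by_contra h
        push_neg at h
        have := hηp (show dist x₁ x < η by
          rw [dist_comm]; exact hx₁.trans_le (min_le_left _ _))
          n (Finset.mem_range.mpr (by omega))
        rw [dist_comm] at this
        linarith
      -- triangle inequality: one of (x,y), (x₁,y) works
      have htri := dist_triangle (T^[n] x) (T^[n] x₁) (T^[n] y)
      have hxy : δ/2 < dist (T^[n] x) (T^[n] y) ∨
          δ/2 < dist (T^[n] x₁) (T^[n] y) := by
        by_contra h
        push_neg at h
        have h2 := dist_triangle (T^[n] x) (T^[n] y) (T^[n] x₁)
        rw [dist_comm (T^[n] y) (T^[n] x₁)] at h2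
        linarith
      rcases hxy with h | h
      · exact ⟨(x, y), Metric.mem_ball_self hε, n, hnN, h⟩
      · refine ⟨(x₁, y), ?_, n, hnN, h⟩
        rw [Metric.mem_ball, Prod.dist_eq]
        simp only [dist_self]
        rw [dist_comm]
        exact max_lt (hx₁.trans_le (min_le_right _ _)) hε
    have hbaire : Dense (⋂ N, A N) := dense_iInter_of_isOpen hopen hdense
    refine hbaire.mono ?_
    intro p hp
    simp only [Set.mem_iInter] at hp
    have hfreq : ∃ᶠ n in Filter.atTop,
        δ/2 ≤ dist (T^[n] p.1) (T^[n] p.2) := by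
      rw [Filter.frequently_atTop]
      intro N
      obtain ⟨n, hn, h⟩ := hp N
      exact ⟨n, hn, h.le⟩
    have := Filter.le_limsup_of_frequently_le hfreq (hbd p)
    simp only [Set.mem_setOf_eq]
    calc δ/4 < δ/2 := by linarith
      _ ≤ _ := this
  · rintro ⟨δ', hδ', hdense⟩
    refine ⟨δ'/2, by linarith, fun x ε hε => ?_⟩
    rw [Metric.dense_iff] at hdense
    obtain ⟨p, hpball, hp⟩ := hdense (x, x) ε hε
    simp only [Set.mem_setOf_eq] at hp
    have hcb : Filter.IsCoboundedUnder (· ≤ ·) Filter.atTop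
        (fun n : ℕ => dist (T^[n] p.1) (T^[n] p.2)) :=
      Filter.IsBoundedUnder.isCoboundedUnder_le
        ⟨0, Filter.eventually_map.mpr (Filter.Eventually.of_forall fun n => dist_nonneg)⟩
    have hfreq := Filter.frequently_lt_of_lt_limsup hcb hp
    obtain ⟨n, hn⟩ := hfreq.exists
    rw [Metric.mem_ball, Prod.dist_eq, max_lt_iff] at hpball
    have h1 : dist p.1 x < ε := hpball.1
    have h2 : dist p.2 x < ε := hpball.2
    have htri := dist_triangle (T^[n] p.1) (T^[n] x) (T^[n] p.2)
    have : δ'/2 < dist (T^[n] p.1) (T^[n] x) ∨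
        δ'/2 < dist (T^[n] x) (T^[n] p.2) := by
      by_contra h; push_neg at h; linarith
    rcases this with h | h
    · exact ⟨p.1, by rwa [dist_comm], n, by rwa [dist_comm (T^[n] p.1)] at h⟩
    · exact ⟨p.2, by rwa [dist_comm], n, h⟩
end

section
/- Let (X,T) be a dynamical system on a compact metric space. If (X,T) is sensitive with constant δ, then for every x ∈ X the set Asym_ε(T)(x) = {y ∈ X : ∃N, ∀k ≥ N, d(T^k x, T^k y) ≤ ε} is a set of first category (meagre) in X, for ε = δ/2. -/
theorem sensitive_asym_first_category
    {X : Type*} [MetricSpace X] [CompactSpace X]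
    (T : X → X) (hT : Continuous T) (δ : ℝ) (hδ : 0 < δ)
    (hsen : ∀ x : X, ∀ ε > 0, ∃ y : X, dist x y < ε ∧
      ∃ n : ℕ, dist (T^[n] x) (T^[n] y) > δ) :
    ∀ x : X, IsMeagre {y : X | ∃ N : ℕ, ∀ k ≥ N, dist (T^[k] x) (T^[k] y) ≤ δ / 2} := by
  intro x
  set F : ℕ → Set X := fun N => {y : X | ∀ k ≥ N, dist (T^[k] x) (T^[k] y) ≤ δ / 2} with hF
  have hsub : {y : X | ∃ N : ℕ, ∀ k ≥ N, dist (T^[k] x) (T^[k] y) ≤ δ / 2} ⊆ ⋃ N, F N := by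
    rintro y ⟨N, hN⟩; exact Set.mem_iUnion.2 ⟨N, hN⟩
  have hclosed : ∀ N, IsClosed (F N) := by
    intro N
    have : F N = ⋂ k, {y : X | k ≥ N → dist (T^[k] x) (T^[k] y) ≤ δ / 2} := by
      ext y; simp [hF, Set.mem_iInter]
    rw [this]
    refine isClosed_iInter fun k => ?_
    by_cases hk : k ≥ N
    · have : {y : X | k ≥ N → dist (T^[k] x) (T^[k] y) ≤ δ / 2}
          = {y : X | dist (T^[k] x) (T^[k] y) ≤ δ / 2} := by
        ext y; simp [hk]
      rw [this]
      exact isClosed_le (Continuous.dist continuous_const (hT.iterate k)) continuous_const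
    · have : {y : X | k ≥ N → dist (T^[k] x) (T^[k] y) ≤ δ / 2} = Set.univ := by
        ext y; simp [hk]
      rw [this]; exact isClosed_univ
  have hint : ∀ N, interior (F N) = ∅ := by
    intro N
    by_contra h
    obtain ⟨y, hy⟩ := Set.nonempty_iff_ne_empty.2 h
    -- neighborhood where all iterates below N stay within δ
    have hev : ∀ᶠ z in nhds y, ∀ n ∈ Finset.range N, dist (T^[n] y) (T^[n] z) < δ := by
      rw [Filter.eventually_all_finset]
      intro n _
      have hc : Filter.Tendsto (T^[n]) (nhds y) (nhds (T^[n] y)) :=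
        (hT.iterate n).continuousAt
      have := (Metric.tendsto_nhds.mp hc) δ hδ
      filter_upwards [this] with z hz using by rwa [dist_comm]
    have hmem : F N ∈ nhds y := mem_interior_iff_mem_nhds.mp hy
    obtain ⟨ε, hε, hball⟩ := Metric.mem_nhds_iff.mp (Filter.inter_mem hmem hev)
    obtain ⟨z, hdz, n, hn⟩ := hsen y ε hε
    have hzball : z ∈ Metric.ball y ε := by rwa [Metric.mem_ball, dist_comm]
    have hz := hball hzball
    by_cases hnN : n ≥ N
    · have hyF : y ∈ F N := interior_subset hy
      have h1 := hyF n hnN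
      have h2 := hz.1 n hnN
      have : dist (T^[n] y) (T^[n] z) ≤ δ := by
        calc dist (T^[n] y) (T^[n] z)
            ≤ dist (T^[n] y) (T^[n] x) + dist (T^[n] x) (T^[n] z) := dist_triangle _ _ _
          _ ≤ δ / 2 + δ / 2 := by rw [dist_comm]; exact add_le_add h1 h2
          _ = δ := by ring
      linarith
    · have := hz.2 n (Finset.mem_range.2 (by omega))
      linarith
  have hmeagre : ∀ N, IsMeagre (F N) := by
    intro N
    rw [isMeagre_iff_countable_union_isNowhereDense]
    exact ⟨{F N}, by
      rintro t rfl
      exact (hclosed N).isNowhereDense_iff.mpr (hint N), Set.countable_singleton _,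
      by simp⟩
  exact (isMeagre_iUnion hmeagre).mono hsub
end

section
/- Let (X,T) be a dynamical system on a compact metric space. For every δ > 0, the whole space X cannot be a δ-scrambled set (if X has at least two points, there exist two distinct points x, y ∈ X with limsup_{n→∞} d(T^n x, T^n y) ≤ δ or not forming a δ-scrambled pair). -/
open Filter Function Set Metric

private lemma dist_bound {X : Type*} [MetricSpace X] [CompactSpace X] :
    ∃ C : ℝ, ∀ y z : X, dist y z ≤ C := by
  obtain ⟨C, hC⟩ := Metric.isBounded_iff.1 (isCompact_univ (X := X)).isBounded
  exact ⟨C, fun y z => hC (mem_univ y) (mem_univ z)⟩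

private lemma freq_small {u : ℕ → ℝ} {C : ℝ} (hC : ∀ n, u n ≤ C)
    (h : Filter.liminf u Filter.atTop = 0) {ε : ℝ} (hε : 0 < ε) :
    ∃ᶠ n in Filter.atTop, u n < ε :=
  Filter.frequently_lt_of_liminf_lt
    (Filter.isCoboundedUnder_ge_of_le _ hC) (by rw [h]; exact hε)

private lemma freq_big {u : ℕ → ℝ} (h0 : ∀ n, 0 ≤ u n) {δ : ℝ}
    (h : δ < Filter.limsup u Filter.atTop) :
    ∃ᶠ n in Filter.atTop, δ < u n :=
  Filter.frequently_lt_of_lt_limsup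
    (Filter.isCoboundedUnder_le_of_le _ h0) h

theorem whole_space_not_delta_scrambled
    {X : Type*} [MetricSpace X] [CompactSpace X]
    (T : X → X) (hT : Continuous T) (δ : ℝ) (hδ : 0 < δ)
    (h2 : ∃ a b : X, a ≠ b) :
    ∃ x y : X, x ≠ y ∧
      ¬ (Filter.liminf (fun n : ℕ => dist (T^[n] x) (T^[n] y)) Filter.atTop = 0 ∧
         Filter.limsup (fun n : ℕ => dist (T^[n] x) (T^[n] y)) Filter.atTop > δ) := by
  by_contra hcon
  push_neg at hcon
  obtain ⟨a, b, hab⟩ := h2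
  obtain ⟨C, hC⟩ := dist_bound (X := X)
  -- Step 1: a fixed point p
  obtain ⟨p, hp⟩ : ∃ p : X, T p = p := by
    by_cases hfa : T a = a
    · exact ⟨a, hfa⟩
    · have hne : a ≠ T a := fun h => hfa h.symm
      obtain ⟨hli, -⟩ := hcon a (T a) hne
      have hli' : Filter.liminf
          (fun n : ℕ => dist (T^[n] a) (T (T^[n] a))) Filter.atTop = 0 := by
        have : (fun n : ℕ => dist (T^[n] a) (T^[n] (T a)))
            = fun n : ℕ => dist (T^[n] a) (T (T^[n] a)) := by
          funext n
          rw [← Function.iterate_succ_apply, Function.iterate_succ_apply']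
        rwa [this] at hli
      have hsel : ∀ k : ℕ, ∃ n : ℕ,
          dist (T^[n] a) (T (T^[n] a)) < 1 / (k + 1) := by
        intro k
        have := freq_small (u := fun n => dist (T^[n] a) (T (T^[n] a)))
          (C := C) (fun n => hC _ _) hli'
          (ε := 1 / (k + 1)) (by positivity)
        exact this.exists
      choose nk hnk using hsel
      obtain ⟨z, -, φ, hφ, hzt⟩ := isCompact_univ.tendsto_subseq
        (x := fun k => T^[nk k] a) (fun k => mem_univ _)
      refine ⟨z, ?_⟩
      have h1 : Filter.Tendsto
          (fun k => dist ((fun k => T^[nk k] a) (φ k)) (T ((fun k => T^[nk k] a) (φ k))))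
          Filter.atTop (nhds (dist z (T z))) :=
        (continuous_id.dist hT).continuousAt.tendsto.comp hzt
      have h2' : Filter.Tendsto (fun k : ℕ => 1 / ((φ k : ℝ) + 1))
          Filter.atTop (nhds 0) := by
        apply tendsto_one_div_add_atTop_nhds_zero_nat.comp
        exact hφ.tendsto_atTop
      have hle : dist z (T z) ≤ 0 := by
        refine le_of_tendsto_of_tendsto' h1 h2' (fun k => ?_)
        exact (hnk (φ k)).le
      have : dist z (T z) = 0 := le_antisymm hle dist_nonneg
      exact ((dist_eq_zero.mp this)).symm
  have hpn : ∀ n : ℕ, T^[n] p = p := fun n => Function.iterate_fixed hp n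
  -- scrambledness against p
  have hscr : ∀ y : X, y ≠ p →
      Filter.liminf (fun n : ℕ => dist (T^[n] y) p) Filter.atTop = 0 ∧
      δ < Filter.limsup (fun n : ℕ => dist (T^[n] y) p) Filter.atTop := by
    intro y hy
    have := hcon y p hy
    simpa only [hpn] using this
  -- a point q ≠ p
  obtain ⟨q, hq⟩ : ∃ q : X, q ≠ p := by
    by_cases h : a = p
    · exact ⟨b, by rw [← h]; exact fun hb => hab hb.symm⟩
    · exact ⟨a, h⟩
  -- a point x with dist x p > δ
  obtain ⟨m, hm⟩ : ∃ m : ℕ, δ < dist (T^[m] q) p :=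
    (freq_big (fun n => dist_nonneg) (hscr q hq).2).exists
  set x := T^[m] q with hxdef
  -- Step: uniform escape bound N on S = {y | δ ≤ dist y p}
  have hSesc : ∀ y : X, δ ≤ dist y p → ∃ n : ℕ, 1 ≤ n ∧ δ < dist (T^[n] y) p := by
    intro y hy
    have hyp : y ≠ p := by
      intro h; rw [h, dist_self] at hy; linarith
    have := freq_big (fun n => dist_nonneg) (hscr y hyp).2
    obtain ⟨n, hn1, hn2⟩ := (Filter.frequently_atTop.1 this) 1
    exact ⟨n, hn1, hn2⟩
  have hScompact : IsCompact {y : X | δ ≤ dist y p} :=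
    ((isClosed_le continuous_const ((continuous_id.dist continuous_const))).isCompact)
  obtain ⟨t, ht⟩ := hScompact.elim_finite_subcover
    (fun n : ℕ => {y : X | δ < dist (T^[n+1] y) p})
    (fun n => isOpen_lt continuous_const ((hT.iterate (n+1)).dist continuous_const))
    (by
      intro y hy
      obtain ⟨n, hn1, hn2⟩ := hSesc y hy
      refine Set.mem_iUnion.2 ⟨n - 1, ?_⟩
      have : n - 1 + 1 = n := Nat.succ_pred_eq_of_pos hn1
      simpa [this] using hn2)
  set N : ℕ := t.sup id + 1 with hNdef
  have hN : ∀ y : X, δ ≤ dist y p → ∃ j : ℕ, 1 ≤ j ∧ j ≤ N ∧ δ < dist (T^[j] y) p := by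
    intro y hy
    obtain ⟨i, hi, hyi⟩ := Set.mem_iUnion₂.1 (ht hy)
    refine ⟨i + 1, by omega, ?_, hyi⟩
    have : i ≤ t.sup id := Finset.le_sup (f := id) hi
    omega
  -- Step: ε such that ball stays within δ for N steps
  have hWopen : IsOpen (⋂ j ∈ Finset.range (N + 1), {y : X | dist (T^[j] y) p < δ}) :=
    isOpen_biInter_finset fun j _ =>
      isOpen_lt ((hT.iterate j).dist continuous_const) continuous_const
  have hpW : p ∈ ⋂ j ∈ Finset.range (N + 1), {y : X | dist (T^[j] y) p < δ} := by
    refine Set.mem_iInter₂.2 fun j _ => ?_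
    simp [hpn j, hδ]
  obtain ⟨ε, hε, hball⟩ := Metric.mem_nhds_iff.1 (hWopen.mem_nhds hpW)
  -- Step: visits to S with gaps ≤ N
  have hvisit : ∀ u : ℕ, ∃ n : ℕ, u ≤ n ∧ n ≤ u + N ∧ δ ≤ dist (T^[n] x) p := by
    intro u
    induction u with
    | zero => exact ⟨0, le_rfl, by omega, by simpa using hm.le⟩
    | succ u ih =>
      obtain ⟨n, h1, h2, h3⟩ := ih
      rcases Nat.lt_or_ge u n with h | h
      · exact ⟨n, h, by omega, h3⟩
      · have hn : n = u := le_antisymm h h1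
        subst hn
        obtain ⟨j, hj1, hj2, hj3⟩ := hN (T^[n] x) h3
        refine ⟨j + n, by omega, by omega, ?_⟩
        rw [Function.iterate_add_apply]
        exact hj3.le
  -- Step: conclusion
  have hxp : x ≠ p := by
    intro h; rw [h, dist_self] at hm; linarith
  obtain ⟨u, hu⟩ : ∃ u : ℕ, dist (T^[u] x) p < ε :=
    (freq_small (C := C) (fun n => hC _ _) (hscr x hxp).1 hε).exists
  obtain ⟨n, h1, h2, h3⟩ := hvisit u
  have hmemW : T^[u] x ∈ ⋂ j ∈ Finset.range (N + 1), {y : X | dist (T^[j] y) p < δ} :=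
    hball (by simpa [Metric.mem_ball] using hu)
  have hlt : dist (T^[n - u] (T^[u] x)) p < δ := by
    have := Set.mem_iInter₂.1 hmemW (n - u) (Finset.mem_range.2 (by omega))
    exact this
  rw [← Function.iterate_add_apply] at hlt
  have heq : n - u + u = n := by omega
  rw [heq] at hlt
  linarith
end

section
/- (Mycielski theorem, version) Let X be a perfect compact metric space and n ≥ 1. If R is a dense G_δ subset of X^n, then there exists a dense subset K ⊆ X which is a countable union of Cantor sets such that for any n pairwise distinct points x_1,…,x_n ∈ K, the tuple (x_1,…,x_n) lies in R. -/
open Metric Set Function Filter Topology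

namespace MyAux

/-- Index types for the levels of the scheme. -/
def I : ℕ → Type
  | 0 => PEmpty
  | (m+1) => (I m × Bool) ⊕ Unit

instance instIFintype : (m : ℕ) → Fintype (I m)
  | 0 => inferInstanceAs (Fintype PEmpty)
  | (m+1) => letI := instIFintype m; inferInstanceAs (Fintype ((I m × Bool) ⊕ Unit))

instance instIDecEq : (m : ℕ) → DecidableEq (I m)
  | 0 => inferInstanceAs (DecidableEq PEmpty)
  | (m+1) => letI := instIDecEq m; inferInstanceAs (DecidableEq ((I m × Bool) ⊕ Unit))

variable {X : Type*} [MetricSpace X]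

lemma avoid [CompactSpace X] (hperf : Perfect (Set.univ : Set X)) {U : Set X} (hU : IsOpen U)
    (hne : U.Nonempty) (F : Set X) (hF : F.Finite) : ∃ x ∈ U, x ∉ F := by
  haveI : PerfectSpace X := ⟨hperf.acc⟩
  obtain ⟨x, hx⟩ := hne
  have hfin : U.Infinite := infinite_of_mem_nhds x (hU.mem_nhds hx)
  obtain ⟨y, hy1, hy2⟩ := (hfin.diff hF).nonempty
  exact ⟨y, hy1, hy2⟩

lemma shrink {n : ℕ} {ι : Type*} {W : Set (Fin n → X)} (hWo : IsOpen W) (hWd : Dense W)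
    (L : List (Fin n → ι)) (x : ι → X) (ρ : ι → ℝ) (hρ : ∀ j, 0 < ρ j) :
    ∃ (x' : ι → X) (ρ' : ι → ℝ), (∀ j, 0 < ρ' j) ∧ (∀ j, ρ' j ≤ ρ j) ∧
      (∀ j, closedBall (x' j) (ρ' j) ⊆ ball (x j) (ρ j)) ∧
      ∀ t ∈ L, Function.Injective t →
        ∀ y : Fin n → X, (∀ k, y k ∈ closedBall (x' (t k)) (ρ' (t k))) → y ∈ W := by
  classical
  induction L generalizing x ρ with
  | nil =>
      refine ⟨x, fun j => ρ j / 2, fun j => by linarith [hρ j], fun j => by linarith [hρ j],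
        fun j z hz => ?_, by simp⟩
      have := hρ j
      simp only [mem_closedBall] at hz
      simp only [mem_ball]
      linarith
  | cons t L ih =>
      obtain ⟨x₁, ρ₁, h1pos, h1le, h1sub, h1W⟩ := ih x ρ hρ
      by_cases hti : Function.Injective t
      · have hO : IsOpen (Set.pi Set.univ fun k => ball (x₁ (t k)) (ρ₁ (t k))) :=
          isOpen_set_pi finite_univ (fun i _ => isOpen_ball)
        have hone : (Set.pi Set.univ fun k => ball (x₁ (t k)) (ρ₁ (t k))).Nonempty :=
          ⟨fun k => x₁ (t k), fun k _ => mem_ball_self (h1pos _)⟩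
        obtain ⟨y, hyW, hyB⟩ := hWd.exists_mem_open hO hone
        obtain ⟨δ, hδ, hδW⟩ := Metric.isOpen_iff.1 hWo y hyW
        have hyb : ∀ k, y k ∈ ball (x₁ (t k)) (ρ₁ (t k)) := fun k => hyB k (mem_univ k)
        set x₂ : ι → X := fun j => if h : ∃ k, t k = j then y h.choose else x₁ j with hx₂
        set ρ₂ : ι → ℝ := fun j =>
          if h : ∃ k, t k = j then
            min (δ/3) (min (ρ₁ j) ((ρ₁ j - dist (y h.choose) (x₁ j))/2))
          else ρ₁ j with hρ₂
        have hkey : ∀ j (h : ∃ k, t k = j), dist (y h.choose) (x₁ j) < ρ₁ j := by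
          intro j h
          have h2 := hyb h.choose
          rw [h.choose_spec] at h2
          exact mem_ball.1 h2
        have h2pos : ∀ j, 0 < ρ₂ j := by
          intro j
          simp only [hρ₂]
          split_ifs with h
          · have := hkey j h
            exact lt_min (by linarith) (lt_min (h1pos j) (by linarith))
          · exact h1pos j
        have h2le : ∀ j, ρ₂ j ≤ ρ₁ j := by
          intro j
          simp only [hρ₂]
          split_ifs with h
          · exact (min_le_right _ _).trans (min_le_left _ _)
          · exact le_rfl
        have h2sub : ∀ j, closedBall (x₂ j) (ρ₂ j) ⊆ closedBall (x₁ j) (ρ₁ j) := by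
          intro j z hz
          simp only [mem_closedBall] at hz ⊢
          by_cases h : ∃ k, t k = j
          · have hk := hkey j h
            have hxj : x₂ j = y h.choose := by simp only [hx₂, dif_pos h]
            have hρj : ρ₂ j ≤ (ρ₁ j - dist (y h.choose) (x₁ j))/2 := by
              simp only [hρ₂, dif_pos h]
              exact (min_le_right _ _).trans (min_le_right _ _)
            rw [hxj] at hz
            calc dist z (x₁ j) ≤ dist z (y h.choose) + dist (y h.choose) (x₁ j) :=
              dist_triangle _ _ _
            _ ≤ ρ₁ j := by linarith
          · have hxj : x₂ j = x₁ j := by simp only [hx₂, dif_neg h]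
            have hρj : ρ₂ j = ρ₁ j := by simp only [hρ₂, dif_neg h]
            rw [hxj, hρj] at hz
            exact hz
        refine ⟨x₂, ρ₂, h2pos, fun j => (h2le j).trans (h1le j),
          fun j => (h2sub j).trans (h1sub j), ?_⟩
        intro t' ht' htinj y' hy'
        rcases List.mem_cons.1 ht' with rfl | hmem
        · refine hδW ?_
          rw [mem_ball, dist_pi_lt_iff hδ]
          intro k
          have h : ∃ k', t' k' = t' k := ⟨k, rfl⟩
          have hck : h.choose = k := htinj h.choose_spec
          have hx : x₂ (t' k) = y k := by
            simp only [hx₂, dif_pos h, hck]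
          have hρ3 : ρ₂ (t' k) ≤ δ/3 := by
            simp only [hρ₂, dif_pos h]
            exact min_le_left _ _
          have hk2 := hy' k
          rw [mem_closedBall, hx] at hk2
          calc dist (y' k) (y k) ≤ δ/3 := le_trans hk2 hρ3
          _ < δ := by linarith
        · exact h1W t' hmem htinj y' fun k => h2sub _ (hy' k)
      · refine ⟨x₁, ρ₁, h1pos, h1le, h1sub, ?_⟩
        intro t' ht' htinj y hy
        rcases List.mem_cons.1 ht' with rfl | hmem
        · exact absurd htinj hti
        · exact h1W t' hmem htinj y hy

lemma sep {κ : Type*} [Fintype κ] (x : κ → X) (hinj : Function.Injective x)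
    (O : κ → Set X) (hO : ∀ u, IsOpen (O u)) (hxO : ∀ u, x u ∈ O u) {ε : ℝ} (hε : 0 < ε) :
    ∃ ρ : κ → ℝ, (∀ u, 0 < ρ u) ∧ (∀ u, ρ u ≤ ε) ∧ (∀ u, closedBall (x u) (ρ u) ⊆ O u) ∧
      Pairwise (Disjoint on fun u => closedBall (x u) (ρ u)) := by
  classical
  have hη : ∀ u, ∃ η, 0 < η ∧ closedBall (x u) η ⊆ O u := by
    intro u
    rcases Metric.isOpen_iff.1 (hO u) (x u) (hxO u) with ⟨η, hη, hsub⟩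
    exact ⟨η/2, by linarith, fun z hz =>
      hsub (mem_ball.2 (lt_of_le_of_lt (mem_closedBall.1 hz) (by linarith)))⟩
  choose η hηpos hηsub using hη
  set s : κ → ℝ := fun u => if h : (Finset.univ.erase u).Nonempty
      then ((Finset.univ.erase u).inf' h fun v => dist (x u) (x v)) / 3 else 1 with hs
  have hspos : ∀ u, 0 < s u := by
    intro u
    simp only [hs]
    split_ifs with h
    · have : 0 < (Finset.univ.erase u).inf' h fun v => dist (x u) (x v) := by
        rw [Finset.lt_inf'_iff]
        intro v hv
        exact dist_pos.2 fun hx => (Finset.mem_erase.1 hv).1 (hinj hx.symm)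
      linarith
    · norm_num
  have hsle : ∀ u v, u ≠ v → s u ≤ dist (x u) (x v) / 3 := by
    intro u v huv
    have hvmem : v ∈ Finset.univ.erase u := Finset.mem_erase.2 ⟨huv.symm, Finset.mem_univ v⟩
    have hne : (Finset.univ.erase u).Nonempty := ⟨v, hvmem⟩
    simp only [hs]
    rw [dif_pos hne]
    have := Finset.inf'_le (fun v => dist (x u) (x v)) hvmem
    linarith
  refine ⟨fun u => min (min (η u) (s u)) ε, fun u => lt_min (lt_min (hηpos u) (hspos u)) hε,
    fun u => min_le_right _ _, fun u => ?_, fun u v huv => ?_⟩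
  · exact (closedBall_subset_closedBall ((min_le_left _ _).trans (min_le_left _ _))).trans
      (hηsub u)
  · rw [Function.onFun]
    rw [Set.disjoint_left]
    intro z hzu hzv
    have h1 : dist z (x u) ≤ dist (x u) (x v) / 3 :=
      le_trans (mem_closedBall.1 hzu) (((min_le_left _ _).trans (min_le_right _ _)).trans
        (hsle u v huv))
    have h2 : dist z (x v) ≤ dist (x v) (x u) / 3 :=
      le_trans (mem_closedBall.1 hzv) (((min_le_left _ _).trans (min_le_right _ _)).trans
        (hsle v u huv.symm))
    have h3 := dist_triangle (x u) z (x v)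
    have h4 : (0:ℝ) < dist (x u) (x v) := dist_pos.2 fun hx => huv (hinj hx)
    rw [dist_comm z (x u)] at h1
    rw [dist_comm (x v) (x u)] at h2
    linarith

lemma stepCore [CompactSpace X] (hperf : Perfect (Set.univ : Set X)) {n : ℕ}
    {W : Set (Fin n → X)} (hWo : IsOpen W) (hWd : Dense W) {ι : Type*} [Fintype ι]
    (c : ι → X) (r : ι → ℝ) (hr : ∀ j, 0 < r j)
    (hdisj : Pairwise (Disjoint on fun j => closedBall (c j) (r j)))
    (d : X) {ε : ℝ} (hε : 0 < ε) :
    ∃ (c' : (ι × Bool) ⊕ Unit → X) (r' : (ι × Bool) ⊕ Unit → ℝ),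
      (∀ u, 0 < r' u) ∧ (∀ u, r' u ≤ ε) ∧
      Pairwise (Disjoint on fun u => closedBall (c' u) (r' u)) ∧
      (∀ j b, closedBall (c' (.inl (j, b))) (r' (.inl (j, b))) ⊆ ball (c j) (r j)) ∧
      closedBall (c' (.inr ())) (r' (.inr ())) ⊆ ball d ε ∧
      ∀ t : Fin n → (ι × Bool) ⊕ Unit, Function.Injective t →
        ∀ y : Fin n → X, (∀ k, y k ∈ closedBall (c' (t k)) (r' (t k))) → y ∈ W := by
  classical
  haveI : PerfectSpace X := ⟨hperf.acc⟩
  have h2 : ∀ j : ι, ∃ z, z ∈ ball (c j) (r j) ∧ z ≠ c j := by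
    intro j
    have hinf : (ball (c j) (r j)).Infinite :=
      infinite_of_mem_nhds (c j) (isOpen_ball.mem_nhds (mem_ball_self (hr j)))
    obtain ⟨z, hz1, hz2⟩ := (hinf.diff (finite_singleton (c j))).nonempty
    exact ⟨z, hz1, hz2⟩
  choose z hz1 hz2 using h2
  obtain ⟨p, hp1, hp2⟩ := avoid hperf isOpen_ball ⟨d, mem_ball_self hε⟩
    (range c ∪ range z) ((finite_range c).union (finite_range z))
  set x0 : (ι × Bool) ⊕ Unit → X := fun u => match u with
    | .inl (j, false) => c j
    | .inl (j, true) => z j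
    | .inr _ => p with hx0
  have hzball : ∀ j, z j ∈ closedBall (c j) (r j) := fun j => ball_subset_closedBall (hz1 j)
  have hcball : ∀ j, c j ∈ closedBall (c j) (r j) := fun j => mem_closedBall_self (hr j).le
  have hmemball : ∀ j b, x0 (.inl (j, b)) ∈ closedBall (c j) (r j) := by
    intro j b; cases b
    · exact hcball j
    · exact hzball j
  have hdiff : ∀ {j j' : ι}, j ≠ j' → ∀ {a b : X}, a ∈ closedBall (c j) (r j) →
      b ∈ closedBall (c j') (r j') → a ≠ b := by
    intro j j' hjj a b ha hb hab
    subst hab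
    exact Set.disjoint_left.1 (hdisj hjj) ha hb
  have hpne : ∀ j b, p ≠ x0 (.inl (j, b)) := by
    intro j b hp
    apply hp2
    cases b
    · exact Or.inl ⟨j, hp.symm⟩
    · exact Or.inr ⟨j, hp.symm⟩
  have hx0inj : Function.Injective x0 := by
    intro u v h
    match u, v with
    | .inl (j, b), .inl (j', b') =>
        rcases eq_or_ne j j' with rfl | hj
        · cases b <;> cases b'
          · rfl
          · exact absurd h.symm (hz2 j)
          · exact absurd h (hz2 j)
          · rfl
        · exact absurd h (hdiff hj (hmemball j b) (hmemball j' b'))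
    | .inl (j, b), .inr _ => exact absurd h ((hpne j b).symm)
    | .inr _, .inl (j, b) => exact absurd h (hpne j b)
    | .inr _, .inr _ => rfl
  set O : (ι × Bool) ⊕ Unit → Set X := fun u => match u with
    | .inl (j, _) => ball (c j) (r j)
    | .inr _ => ball d ε with hO
  have hOopen : ∀ u, IsOpen (O u) := by
    intro u; match u with
    | .inl (j, _) => exact isOpen_ball
    | .inr _ => exact isOpen_ball
  have hxO : ∀ u, x0 u ∈ O u := by
    intro u; match u with
    | .inl (j, b) =>
        cases b
        · exact mem_ball_self (hr j)
        · exact hz1 j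
    | .inr _ => exact hp1
  obtain ⟨ρ0, hρ0pos, hρ0ε, hρ0sub, hρ0disj⟩ := sep x0 hx0inj O hOopen hxO hε
  obtain ⟨x', ρ', hpos, hle, hsub, hW⟩ := shrink hWo hWd
    (Finset.univ.toList (α := Fin n → (ι × Bool) ⊕ Unit)) x0 ρ0 hρ0pos
  refine ⟨x', ρ', hpos, fun u => (hle u).trans (hρ0ε u), fun u v huv => ?_, ?_, ?_, ?_⟩
  · exact (hρ0disj huv).mono ((hsub u).trans ball_subset_closedBall)
      ((hsub v).trans ball_subset_closedBall)
  · intro j b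
    exact ((hsub _).trans ball_subset_closedBall).trans (hρ0sub (.inl (j, b)))
  · exact ((hsub _).trans ball_subset_closedBall).trans (hρ0sub (.inr ()))
  · intro t ht y hy
    exact hW t (by simp) ht y hy

structure Lev {X : Type*} [MetricSpace X] {n : ℕ} (W : Set (Fin n → X)) (m : ℕ) where
  c : I m → X
  r : I m → ℝ
  pos : ∀ j, 0 < r j
  bd : ∀ j, r j ≤ (1/2 : ℝ)^m
  disj : Pairwise (Disjoint on fun j => closedBall (c j) (r j))
  tup : ∀ t : Fin n → I m, Function.Injective t →
    ∀ y : Fin n → X, (∀ k, y k ∈ closedBall (c (t k)) (r (t k))) → y ∈ W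

def base {n : ℕ} (hn : 1 ≤ n) (W : Set (Fin n → X)) : Lev W 0 where
  c := fun j => PEmpty.elim j
  r := fun j => PEmpty.elim j
  pos := fun j => PEmpty.elim j
  bd := fun j => PEmpty.elim j
  disj := fun j => PEmpty.elim j
  tup := fun t _ => PEmpty.elim (t ⟨0, hn⟩)

lemma stepEx [CompactSpace X] (hperf : Perfect (Set.univ : Set X)) {n m : ℕ}
    {V W : Set (Fin n → X)} (hWo : IsOpen W) (hWd : Dense W) (e : X) (P : Lev V m) :
    ∃ Q : Lev W (m+1),
      (∀ (j : I m) (b : Bool),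
        closedBall (Q.c (Sum.inl (j, b))) (Q.r (Sum.inl (j, b))) ⊆ ball (P.c j) (P.r j)) ∧
      closedBall (Q.c (Sum.inr ())) (Q.r (Sum.inr ())) ⊆ ball e ((1/2 : ℝ)^(m+1)) := by
  have hε : (0:ℝ) < (1/2 : ℝ)^(m+1) := by positivity
  obtain ⟨c', r', hpos, hle, hdisj, hsub, hroot, htup⟩ :=
    stepCore hperf hWo hWd P.c P.r P.pos P.disj e hε
  exact ⟨⟨c', r', hpos, hle, hdisj, htup⟩, hsub, hroot⟩

variable [CompactSpace X] [Nonempty X]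

noncomputable def F (hperf : Perfect (Set.univ : Set X)) {n : ℕ}
    (V : ℕ → Set (Fin n → X)) (hVo : ∀ k, IsOpen (V k)) (hVd : ∀ k, Dense (V k))
    (hn : 1 ≤ n) (e : ℕ → X) : (m : ℕ) → Lev (⋂ k : Fin (m+1), V (k : ℕ)) m
  | 0 => base hn _
  | (m+1) => (stepEx hperf
      (isOpen_iInter_of_finite fun k : Fin (m+2) => hVo k)
      (dense_iInter_of_isOpen (fun k : Fin (m+2) => hVo k) (fun k => hVd k))
      (e m) (F hperf V hVo hVd hn e m)).choose

lemma F_cross (hperf : Perfect (Set.univ : Set X)) {n : ℕ}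
    (V : ℕ → Set (Fin n → X)) (hVo : ∀ k, IsOpen (V k)) (hVd : ∀ k, Dense (V k))
    (hn : 1 ≤ n) (e : ℕ → X) (m : ℕ) :
    (∀ (j : I m) (b : Bool),
      closedBall ((F hperf V hVo hVd hn e (m+1)).c (Sum.inl (j, b)))
          ((F hperf V hVo hVd hn e (m+1)).r (Sum.inl (j, b)))
        ⊆ ball ((F hperf V hVo hVd hn e m).c j) ((F hperf V hVo hVd hn e m).r j)) ∧
    closedBall ((F hperf V hVo hVd hn e (m+1)).c (Sum.inr ()))
        ((F hperf V hVo hVd hn e (m+1)).r (Sum.inr ()))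
      ⊆ ball (e m) ((1/2 : ℝ)^(m+1)) :=
  (stepEx hperf
      (isOpen_iInter_of_finite fun k : Fin (m+2) => hVo k)
      (dense_iInter_of_isOpen (fun k : Fin (m+2) => hVo k) (fun k => hVd k))
      (e m) (F hperf V hVo hVd hn e m)).choose_spec

def nd : (i : ℕ) → (ℕ → Bool) → (k : ℕ) → I (i + 1 + k)
  | _, _, 0 => Sum.inr ()
  | i, g, (k+1) => Sum.inl (nd i g k, g k)

variable (hperf : Perfect (Set.univ : Set X)) {n : ℕ}
  (V : ℕ → Set (Fin n → X)) (hVo : ∀ k, IsOpen (V k)) (hVd : ∀ k, Dense (V k))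
  (hn : 1 ≤ n) (e : ℕ → X)

lemma nest (i : ℕ) (g : ℕ → Bool) (k : ℕ) :
    closedBall ((F hperf V hVo hVd hn e (i+1+(k+1))).c (nd i g (k+1)))
        ((F hperf V hVo hVd hn e (i+1+(k+1))).r (nd i g (k+1)))
      ⊆ closedBall ((F hperf V hVo hVd hn e (i+1+k)).c (nd i g k))
        ((F hperf V hVo hVd hn e (i+1+k)).r (nd i g k)) :=
  ((F_cross hperf V hVo hVd hn e (i+1+k)).1 (nd i g k) (g k)).trans ball_subset_closedBall

lemma nest_le (i : ℕ) (g : ℕ → Bool) {k k' : ℕ} (h : k ≤ k') :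
    closedBall ((F hperf V hVo hVd hn e (i+1+k')).c (nd i g k'))
        ((F hperf V hVo hVd hn e (i+1+k')).r (nd i g k'))
      ⊆ closedBall ((F hperf V hVo hVd hn e (i+1+k)).c (nd i g k))
        ((F hperf V hVo hVd hn e (i+1+k)).r (nd i g k)) := by
  induction k', h using Nat.le_induction with
  | base => exact subset_rfl
  | succ k' hk ih => exact (nest hperf V hVo hVd hn e i g k').trans ih

lemma cauchy (i : ℕ) (g : ℕ → Bool) :
    CauchySeq (fun k => (F hperf V hVo hVd hn e (i+1+k)).c (nd i g k)) := by
  apply cauchySeq_of_le_geometric (1/2 : ℝ) ((1/2 : ℝ)^(i+1)) (by norm_num)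
  intro k
  have hc : (F hperf V hVo hVd hn e (i+1+(k+1))).c (nd i g (k+1)) ∈
      ball ((F hperf V hVo hVd hn e (i+1+k)).c (nd i g k))
        ((F hperf V hVo hVd hn e (i+1+k)).r (nd i g k)) :=
    (F_cross hperf V hVo hVd hn e (i+1+k)).1 (nd i g k) (g k)
      (mem_closedBall_self ((F hperf V hVo hVd hn e (i+1+(k+1))).pos _).le)
  have hb := (F hperf V hVo hVd hn e (i+1+k)).bd (nd i g k)
  rw [dist_comm]
  rw [← pow_add]
  exact le_trans (mem_ball.1 hc).le hb

noncomputable def fpt (i : ℕ) (g : ℕ → Bool) : X :=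
  (cauchySeq_tendsto_of_complete (cauchy hperf V hVo hVd hn e i g)).choose

lemma fpt_tendsto (i : ℕ) (g : ℕ → Bool) :
    Filter.Tendsto (fun k => (F hperf V hVo hVd hn e (i+1+k)).c (nd i g k)) atTop
      (𝓝 (fpt hperf V hVo hVd hn e i g)) :=
  (cauchySeq_tendsto_of_complete (cauchy hperf V hVo hVd hn e i g)).choose_spec

lemma fpt_mem (i : ℕ) (g : ℕ → Bool) (k : ℕ) :
    fpt hperf V hVo hVd hn e i g ∈
      closedBall ((F hperf V hVo hVd hn e (i+1+k)).c (nd i g k))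
        ((F hperf V hVo hVd hn e (i+1+k)).r (nd i g k)) := by
  apply isClosed_closedBall.mem_of_tendsto (fpt_tendsto hperf V hVo hVd hn e i g)
  rw [eventually_atTop]
  refine ⟨k, fun k' hk' => ?_⟩
  exact nest_le hperf V hVo hVd hn e i g hk'
    (mem_closedBall_self ((F hperf V hVo hVd hn e (i+1+k')).pos _).le)

lemma fpt_cont (i : ℕ) : Continuous (fpt hperf V hVo hVd hn e i) := by
  rw [continuous_iff_continuousAt]
  intro g
  rw [ContinuousAt, Metric.tendsto_nhds]
  intro ε hε
  obtain ⟨k, hk⟩ : ∃ k : ℕ, 2*(1/2:ℝ)^(i+1+k) < ε := by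
    have h0 : Filter.Tendsto (fun k : ℕ => 2*(1/2:ℝ)^(i+1+k)) atTop (𝓝 0) := by
      have h1 : Filter.Tendsto (fun k : ℕ => (1/2:ℝ)^k) atTop (𝓝 0) :=
        tendsto_pow_atTop_nhds_zero_of_lt_one (by norm_num) (by norm_num)
      have h2 := (h1.const_mul (2*(1/2:ℝ)^(i+1)))
      simp only [mul_zero] at h2
      convert h2 using 2 with k
      rw [pow_add]
      ring
    exact (h0.eventually_lt_const hε).exists
  have hU : IsOpen {g' : ℕ → Bool | ∀ j ∈ Finset.range k, g' j = g j} := by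
    have : {g' : ℕ → Bool | ∀ j ∈ Finset.range k, g' j = g j} =
        ⋂ j ∈ Finset.range k, (fun g' : ℕ → Bool => g' j) ⁻¹' {g j} := by
      ext g'; simp [Set.mem_iInter]
    rw [this]
    exact isOpen_biInter_finset fun j _ =>
      (continuous_apply j).isOpen_preimage _ (isOpen_discrete _)
  have hgU : g ∈ {g' : ℕ → Bool | ∀ j ∈ Finset.range k, g' j = g j} := fun j _ => rfl
  filter_upwards [hU.mem_nhds hgU] with g' hg'
  have hnd : ∀ k', k' ≤ k → nd i g' k' = nd i g k' := by
    intro k'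
    induction k' with
    | zero => intro _; rfl
    | succ k'' ihk =>
        intro hk'
        have e1 : nd i g' (k''+1) = Sum.inl (nd i g' k'', g' k'') := rfl
        have e2 : nd i g (k''+1) = Sum.inl (nd i g k'', g k'') := rfl
        rw [e1, e2, ihk (Nat.le_of_succ_le hk'), hg' k'' (Finset.mem_range.2 hk')]
  have hm1 := fpt_mem hperf V hVo hVd hn e i g' k
  have hm2 := fpt_mem hperf V hVo hVd hn e i g k
  rw [hnd k le_rfl] at hm1
  have hb := (F hperf V hVo hVd hn e (i+1+k)).bd (nd i g k)
  have d1 := mem_closedBall.1 hm1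
  have d2 := mem_closedBall.1 hm2
  calc dist (fpt hperf V hVo hVd hn e i g') (fpt hperf V hVo hVd hn e i g)
      ≤ dist (fpt hperf V hVo hVd hn e i g') ((F hperf V hVo hVd hn e (i+1+k)).c (nd i g k))
        + dist ((F hperf V hVo hVd hn e (i+1+k)).c (nd i g k)) (fpt hperf V hVo hVd hn e i g) :=
        dist_triangle _ _ _
  _ ≤ (1/2:ℝ)^(i+1+k) + (1/2:ℝ)^(i+1+k) := by
        rw [dist_comm ((F hperf V hVo hVd hn e (i+1+k)).c (nd i g k))]
        exact add_le_add (d1.trans hb) (d2.trans hb)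
  _ < ε := by linarith

lemma fpt_inj (i : ℕ) : Function.Injective (fpt hperf V hVo hVd hn e i) := by
  intro g g' h
  by_contra hne
  obtain ⟨k, hk⟩ := Function.ne_iff.1 hne
  have hndne : nd i g (k+1) ≠ nd i g' (k+1) := by
    intro heq
    have e1 : nd i g (k+1) = Sum.inl (nd i g k, g k) := rfl
    have e2 : nd i g' (k+1) = Sum.inl (nd i g' k, g' k) := rfl
    rw [e1, e2] at heq
    exact hk (congrArg (fun u => match u with
      | Sum.inl (_, b) => b
      | Sum.inr _ => false) heq)
  have hdisj := (F hperf V hVo hVd hn e (i+1+(k+1))).disj hndne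
  have hm1 := fpt_mem hperf V hVo hVd hn e i g (k+1)
  have hm2 := fpt_mem hperf V hVo hVd hn e i g' (k+1)
  rw [h] at hm1
  exact Set.disjoint_left.1 hdisj hm1 hm2

lemma cast_c {m₁ m₂ : ℕ} (h : m₁ = m₂) (j : I m₁) :
    (F hperf V hVo hVd hn e m₂).c (cast (congrArg I h) j) = (F hperf V hVo hVd hn e m₁).c j := by
  subst h; rfl

lemma cast_r {m₁ m₂ : ℕ} (h : m₁ = m₂) (j : I m₁) :
    (F hperf V hVo hVd hn e m₂).r (cast (congrArg I h) j) = (F hperf V hVo hVd hn e m₁).r j := by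
  subst h; rfl

end MyAux

theorem mycielski_theorem
    {X : Type*} [MetricSpace X] [CompactSpace X] [Nonempty X]
    (hperf : Perfect (Set.univ : Set X))
    (n : ℕ) (hn : 1 ≤ n) (R : Set (Fin n → X)) (hR : IsGδ R) (hRd : Dense R) :
    ∃ C : ℕ → Set X,
      (∀ i : ℕ, Nonempty (C i ≃ₜ (ℕ → Bool))) ∧
      Dense (⋃ i, C i) ∧
      ∀ x : Fin n → X, Function.Injective x → (∀ i, x i ∈ ⋃ j, C j) → x ∈ R := by
  classical
  obtain ⟨V, hVo, hVR⟩ := IsGδ.eq_iInter_nat hR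
  have hVd : ∀ k, Dense (V k) := fun k => hRd.mono (by rw [hVR]; exact Set.iInter_subset _ k)
  obtain ⟨d, hd⟩ := TopologicalSpace.exists_dense_seq X
  set e : ℕ → X := fun m => d (Nat.unpair m).1 with he
  refine ⟨fun i => Set.range (MyAux.fpt hperf V hVo hVd hn e i), fun i => ?_, ?_, ?_⟩
  · exact ⟨(Topology.IsEmbedding.toHomeomorph (f := MyAux.fpt hperf V hVo hVd hn e i)
      (((MyAux.fpt_cont hperf V hVo hVd hn e i).isClosedEmbedding
        (MyAux.fpt_inj hperf V hVo hVd hn e i)).toIsEmbedding)).symm⟩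
  · rw [Metric.dense_iff]
    intro x ε hε
    have hε2 : (0:ℝ) < ε/2 := by linarith
    obtain ⟨i, hi⟩ := hd.exists_dist_lt x hε2
    obtain ⟨k, hk⟩ := exists_pow_lt_of_lt_one hε2 (show (1/2:ℝ) < 1 by norm_num)
    set m := Nat.pair i k with hm
    set g : ℕ → Bool := fun _ => false with hg
    have hroot := (MyAux.F_cross hperf V hVo hVd hn e m).2
    have hmem0 : MyAux.fpt hperf V hVo hVd hn e m g ∈
        closedBall ((MyAux.F hperf V hVo hVd hn e (m+1)).c (Sum.inr ()))
          ((MyAux.F hperf V hVo hVd hn e (m+1)).r (Sum.inr ())) :=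
      MyAux.fpt_mem hperf V hVo hVd hn e m g 0
    have hin : MyAux.fpt hperf V hVo hVd hn e m g ∈ ball (e m) ((1/2:ℝ)^(m+1)) := hroot hmem0
    have h3 : dist (MyAux.fpt hperf V hVo hVd hn e m g) (e m) < (1/2:ℝ)^(m+1) := mem_ball.1 hin
    have h4 : e m = d i := by rw [he]; simp [hm, Nat.unpair_pair]
    have h5 : ((1:ℝ)/2)^(m+1) ≤ (1/2:ℝ)^k := by
      apply pow_le_pow_of_le_one (by norm_num) (by norm_num)
      exact le_trans (Nat.right_le_pair i k) (Nat.le_succ m)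
    refine ⟨MyAux.fpt hperf V hVo hVd hn e m g, ?_, Set.mem_iUnion.2 ⟨m, Set.mem_range_self g⟩⟩
    rw [mem_ball]
    rw [dist_comm]
    have h6 := dist_triangle x (e m) (MyAux.fpt hperf V hVo hVd hn e m g)
    rw [h4] at h3 h6
    rw [dist_comm (MyAux.fpt hperf V hVo hVd hn e m g) (d i)] at h3
    linarith
  · intro x hx hxmem
    have hxg : ∀ k : Fin n, ∃ i g, MyAux.fpt hperf V hVo hVd hn e i g = x k := by
      intro k
      obtain ⟨i, hmem'⟩ := Set.mem_iUnion.1 (hxmem k)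
      obtain ⟨g, hg⟩ := hmem'
      exact ⟨i, g, hg⟩
    choose iof gof hfg using hxg
    rw [hVR, Set.mem_iInter]
    intro q
    have hev1 : ∀ᶠ m : ℕ in atTop, ∀ k k' : Fin n, k ≠ k' →
        2*(1/2:ℝ)^m < dist (x k) (x k') := by
      rw [eventually_all]; intro k; rw [eventually_all]; intro k'
      rcases eq_or_ne k k' with rfl | hkk
      · exact Eventually.of_forall fun m h => absurd rfl h
      · have h0 : Filter.Tendsto (fun m : ℕ => 2*(1/2:ℝ)^m) atTop (𝓝 0) := by
          have h1 : Filter.Tendsto (fun m : ℕ => (1/2:ℝ)^m) atTop (𝓝 0) :=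
            tendsto_pow_atTop_nhds_zero_of_lt_one (by norm_num) (by norm_num)
          simpa using h1.const_mul 2
        have h2 := h0.eventually_lt_const (dist_pos.2 fun he' => hkk (hx he'))
        filter_upwards [h2] with m hm _
        exact hm
    have hev2 : ∀ᶠ m : ℕ in atTop, ∀ k : Fin n, iof k + 1 ≤ m := by
      rw [eventually_all]; intro k; exact eventually_ge_atTop _
    obtain ⟨m, ⟨hm1, hm2⟩, hm3⟩ := ((hev1.and hev2).and (eventually_ge_atTop q)).exists
    have hkkm : ∀ k : Fin n, iof k + 1 + (m - (iof k + 1)) = m :=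
      fun k => Nat.add_sub_cancel' (hm2 k)
    set t : Fin n → MyAux.I m := fun k =>
      cast (congrArg MyAux.I (hkkm k)) (MyAux.nd (iof k) (gof k) (m - (iof k + 1))) with ht
    have hmemt : ∀ k, x k ∈ closedBall ((MyAux.F hperf V hVo hVd hn e m).c (t k))
        ((MyAux.F hperf V hVo hVd hn e m).r (t k)) := by
      intro k
      have h1' := MyAux.fpt_mem hperf V hVo hVd hn e (iof k) (gof k) (m - (iof k + 1))
      rw [hfg k] at h1'
      rw [ht]
      simp only
      rw [MyAux.cast_c hperf V hVo hVd hn e (hkkm k), MyAux.cast_r hperf V hVo hVd hn e (hkkm k)]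
      exact h1'
    have htinj : Function.Injective t := by
      intro k k' hkk'
      by_contra hne
      have h1' := hmemt k
      have h2' := hmemt k'
      rw [hkk'] at h1'
      have hb := (MyAux.F hperf V hVo hVd hn e m).bd (t k')
      have hd1 := mem_closedBall.1 h1'
      have hd2 := mem_closedBall.1 h2'
      have htri := dist_triangle (x k) ((MyAux.F hperf V hVo hVd hn e m).c (t k')) (x k')
      rw [dist_comm ((MyAux.F hperf V hVo hVd hn e m).c (t k')) (x k')] at htri
      have hlt := hm1 k k' hne
      linarith
    have hmain := (MyAux.F hperf V hVo hVd hn e m).tup t htinj x hmemt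
    exact Set.mem_iInter.1 hmain ⟨q, Nat.lt_succ_of_le hm3⟩
end

section
/- If a non-trivial dynamical system (X,T) on a compact metric space is weakly mixing, then (X,T) is Li-Yorke δ-chaotic for some δ > 0: there exists an uncountable set C ⊆ X such that for all distinct x, y ∈ C, liminf_n d(T^n x, T^n y) = 0 and limsup_n d(T^n x, T^n y) > δ. -/
open Filter Set Topology Metric TopologicalSpace

section MycielskiAux

variable {X : Type*} [MetricSpace X]

private lemma myc_dense_diff_singleton (hperf : ∀ x : X, ∀ ε > 0, ∃ y, y ≠ x ∧ dist y x < ε)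
    {s : Set X} (hd : Dense s) (a : X) : Dense (s \ {a}) := by
  rw [dense_iff_inter_open] at hd ⊢
  intro U hU hUne
  have hUa : (U \ {a}).Nonempty := by
    by_cases ha : a ∈ U
    · obtain ⟨ε, hε, hball⟩ := Metric.isOpen_iff.1 hU a ha
      obtain ⟨y, hy, hyd⟩ := hperf a ε hε
      exact ⟨y, hball (by rwa [mem_ball]), by simpa using hy⟩
    · obtain ⟨z, hz⟩ := hUne
      exact ⟨z, hz, fun h => ha (by rwa [← mem_singleton_iff.1 h])⟩
  obtain ⟨z, hz1, hz2⟩ := hd (U \ {a}) (hU.sdiff isClosed_singleton) hUa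
  exact ⟨z, hz1.1, hz2, hz1.2⟩

private lemma myc_dense_diff_finite (hperf : ∀ x : X, ∀ ε > 0, ∃ y, y ≠ x ∧ dist y x < ε)
    {s t : Set X} (hd : Dense s) (ht : t.Finite) : Dense (s \ t) := by
  refine Set.Finite.induction_on (motive := fun t _ => Dense (s \ t)) t ht (by simpa using hd) ?_
  intro a u _ _ ih
  have h : s \ insert a u = (s \ u) \ {a} := by ext z; simp [not_or]; tauto
  rw [h]
  exact myc_dense_diff_singleton hperf ih a

private lemma myc_shrink_pair {D : Set (X × X)} (hDo : IsOpen D) (hDd : Dense D)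
    {U₁ U₂ : Set X} (h1 : IsOpen U₁) (h2 : IsOpen U₂) (hn1 : U₁.Nonempty) (hn2 : U₂.Nonempty) :
    ∃ V₁ V₂ : Set X, IsOpen V₁ ∧ IsOpen V₂ ∧ V₁.Nonempty ∧ V₂.Nonempty ∧ V₁ ⊆ U₁ ∧ V₂ ⊆ U₂ ∧
      closure V₁ ×ˢ closure V₂ ⊆ D := by
  obtain ⟨p, hpUV, hpD⟩ := hDd.inter_open_nonempty (U₁ ×ˢ U₂) (h1.prod h2) (hn1.prod hn2)
  have hopen : IsOpen (D ∩ U₁ ×ˢ U₂) := hDo.inter (h1.prod h2)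
  obtain ⟨ε, hε, hball⟩ := Metric.isOpen_iff.1 hopen p ⟨hpD, hpUV⟩
  refine ⟨ball p.1 (ε/2), ball p.2 (ε/2), isOpen_ball, isOpen_ball,
    ⟨p.1, by simp [hε]⟩, ⟨p.2, by simp [hε]⟩, ?_, ?_, ?_⟩
  · intro z hz
    have : ((z, p.2) : X × X) ∈ D ∩ U₁ ×ˢ U₂ := by
      apply hball
      rw [mem_ball, Prod.dist_eq]
      simp only [dist_self]
      exact max_lt (lt_of_lt_of_le (mem_ball.1 hz) (by linarith)) hε
    exact this.2.1
  · intro z hz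
    have : ((p.1, z) : X × X) ∈ D ∩ U₁ ×ˢ U₂ := by
      apply hball
      rw [mem_ball, Prod.dist_eq]
      simp only [dist_self]
      exact max_lt hε (lt_of_lt_of_le (mem_ball.1 hz) (by linarith))
    exact this.2.2
  · rintro ⟨z₁, z₂⟩ ⟨hz1, hz2⟩
    have hc1 : dist z₁ p.1 ≤ ε/2 :=
      (Metric.closure_ball_subset_closedBall hz1 : z₁ ∈ closedBall p.1 (ε/2))
    have hc2 : dist z₂ p.2 ≤ ε/2 :=
      (Metric.closure_ball_subset_closedBall hz2 : z₂ ∈ closedBall p.2 (ε/2))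
    have : ((z₁, z₂) : X × X) ∈ D ∩ U₁ ×ˢ U₂ := by
      apply hball
      rw [mem_ball, Prod.dist_eq]
      exact max_lt (lt_of_le_of_lt hc1 (by linarith)) (lt_of_le_of_lt hc2 (by linarith))
    exact this.1

private lemma myc_split (hperf : ∀ x : X, ∀ ε > 0, ∃ y, y ≠ x ∧ dist y x < ε)
    {U : Set X} (hUo : IsOpen U) (hUne : U.Nonempty) :
    ∃ V : Bool → Set X, (∀ i, IsOpen (V i)) ∧ (∀ i, (V i).Nonempty) ∧
      (∀ i, closure (V i) ⊆ U) ∧ Disjoint (closure (V false)) (closure (V true)) := by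
  obtain ⟨x, hx⟩ := hUne
  obtain ⟨ε, hε, hball⟩ := Metric.isOpen_iff.1 hUo x hx
  obtain ⟨y, hyx, hyd⟩ := hperf x (ε/2) (by linarith)
  have hd : 0 < dist y x := dist_pos.2 hyx
  set r := dist y x / 3 with hr
  have hrpos : 0 < r := by positivity
  refine ⟨fun i => if i then ball y r else ball x r, ?_, ?_, ?_, ?_⟩
  · intro i; cases i <;> simp [isOpen_ball]
  · intro i; cases i <;> simp [hrpos]
  · intro i; cases i <;> simp only [if_true, if_false, Bool.false_eq_true] <;>
      refine subset_trans Metric.closure_ball_subset_closedBall (fun z hz => hball ?_) <;>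
      rw [mem_ball]
    · calc dist z x ≤ r := hz
        _ < ε := by rw [hr]; linarith
    · calc dist z x ≤ dist z y + dist y x := dist_triangle z y x
        _ ≤ r + dist y x := by exact add_le_add_left (show dist z y ≤ r from hz) _
        _ < ε := by rw [hr]; linarith
  · simp only [if_true, if_false, Bool.false_eq_true]
    rw [Set.disjoint_left]
    intro z hz1 hz2
    have h1 : dist z x ≤ r := Metric.closure_ball_subset_closedBall hz1
    have h2 : dist z y ≤ r := Metric.closure_ball_subset_closedBall hz2
    have := dist_triangle y z x
    rw [dist_comm z y] at h2
    have : dist y x ≤ 2 * r := by linarith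
    rw [hr] at this; linarith

private lemma myc_shrink_family {ι : Type*} [Fintype ι] [DecidableEq ι]
    {D : Set (X × X)} (hDo : IsOpen D) (hDd : Dense D)
    (U : ι → Set X) (hUo : ∀ i, IsOpen (U i)) (hUne : ∀ i, (U i).Nonempty) :
    ∃ V : ι → Set X, (∀ i, IsOpen (V i)) ∧ (∀ i, (V i).Nonempty) ∧ (∀ i, V i ⊆ U i) ∧
      ∀ i j, i ≠ j → closure (V i) ×ˢ closure (V j) ⊆ D := by
  suffices h : ∀ P : Finset (ι × ι), ∃ V : ι → Set X,
      (∀ i, IsOpen (V i)) ∧ (∀ i, (V i).Nonempty) ∧ (∀ i, V i ⊆ U i) ∧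
      ∀ p ∈ P, p.1 ≠ p.2 → closure (V p.1) ×ˢ closure (V p.2) ⊆ D by
    obtain ⟨V, h1, h2, h3, h4⟩ := h Finset.univ
    exact ⟨V, h1, h2, h3, fun i j hij => h4 (i, j) (Finset.mem_univ _) hij⟩
  intro P
  induction P using Finset.induction_on with
  | empty => exact ⟨U, hUo, hUne, fun i => subset_rfl, by simp⟩
  | @insert q P hq ih =>
      obtain ⟨V, h1, h2, h3, h4⟩ := ih
      by_cases hij : q.1 = q.2
      · refine ⟨V, h1, h2, h3, fun p hp hpne => ?_⟩
        rcases Finset.mem_insert.1 hp with rfl | hp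
        · exact absurd hij hpne
        · exact h4 p hp hpne
      · obtain ⟨W₁, W₂, hw1, hw2, hw3, hw4, hw5, hw6, hw7⟩ :=
          myc_shrink_pair hDo hDd (h1 q.1) (h1 q.2) (h2 q.1) (h2 q.2)
        set V' : ι → Set X := Function.update (Function.update V q.1 W₁) q.2 W₂ with hV'
        have hV'1 : V' q.1 = W₁ := by
          rw [hV', Function.update_of_ne hij, Function.update_self]
        have hV'2 : V' q.2 = W₂ := by rw [hV', Function.update_self]
        have hsub : ∀ k, V' k ⊆ V k := by
          intro k
          by_cases hk2 : k = q.2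
          · subst hk2; rw [hV'2]; exact hw6
          · by_cases hk1 : k = q.1
            · subst hk1; rw [hV'1]; exact hw5
            · have : V' k = V k := by
                rw [hV', Function.update_of_ne hk2, Function.update_of_ne hk1]
              rw [this]
        have hprops : ∀ k, IsOpen (V' k) ∧ (V' k).Nonempty := by
          intro k
          by_cases hk2 : k = q.2
          · subst hk2; rw [hV'2]; exact ⟨hw2, hw4⟩
          · by_cases hk1 : k = q.1
            · subst hk1; rw [hV'1]; exact ⟨hw1, hw3⟩
            · have : V' k = V k := by
                rw [hV', Function.update_of_ne hk2, Function.update_of_ne hk1]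
              rw [this]; exact ⟨h1 k, h2 k⟩
        refine ⟨V', fun k => (hprops k).1, fun k => (hprops k).2,
          fun k => (hsub k).trans (h3 k), fun p hp hpne => ?_⟩
        rcases Finset.mem_insert.1 hp with rfl | hp
        · rw [hV'1, hV'2]; exact hw7
        · exact subset_trans
            (Set.prod_mono (closure_mono (hsub p.1)) (closure_mono (hsub p.2))) (h4 p hp hpne)

end MycielskiAux

section Mycielski

variable {X : Type*} [MetricSpace X] [CompactSpace X] [Nonempty X]

/-- Mycielski-type theorem: given countably many dense open subsets of `X × X`,
there is an uncountable set `C` all of whose ordered distinct pairs lie in all of them. -/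
private theorem mycielski_main (hperf : ∀ x : X, ∀ ε > 0, ∃ y, y ≠ x ∧ dist y x < ε)
    (G : ℕ → Set (X × X)) (hGo : ∀ m, IsOpen (G m)) (hGd : ∀ m, Dense (G m)) :
    ∃ C : Set X, ¬ C.Countable ∧ ∀ x ∈ C, ∀ y ∈ C, x ≠ y → ∀ m, (x, y) ∈ G m := by
  classical
  let Sch : ℕ → Type _ := fun n => {f : (Fin n → Bool) → Set X //
    (∀ s, IsOpen (f s)) ∧ (∀ s, (f s).Nonempty) ∧
    (∀ s t, s ≠ t → Disjoint (closure (f s)) (closure (f t))) ∧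
    (∀ s t, s ≠ t → ∀ m, m ≤ n → closure (f s) ×ˢ closure (f t) ⊆ G m)}
  have base : Sch 0 := ⟨fun _ => univ, fun _ => isOpen_univ, fun _ => univ_nonempty,
    fun s t hst => absurd (Subsingleton.elim s t) hst,
    fun s t hst => absurd (Subsingleton.elim s t) hst⟩
  have hstep : ∀ n (f : Sch n), ∃ g : Sch (n+1),
      ∀ (s : Fin n → Bool) (i : Bool), closure (g.1 (Fin.snoc s i)) ⊆ f.1 s := by
    intro n f
    obtain ⟨f, hfo, hfne, hfdisj, hfcross⟩ := f
    choose V hVo hVne hVsub hVdisj using fun s => myc_split hperf (hfo s) (hfne s)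
    set D : Set (X × X) := ⋂ m : Fin (n+2), G m with hD
    have hDo : IsOpen D := isOpen_iInter_of_finite fun m => hGo m
    have hDd : Dense D := dense_iInter_of_isOpen (fun m => hGo m.1) (fun m => hGd m.1)
    set U' : (Fin (n+1) → Bool) → Set X :=
      fun a => V (fun i : Fin n => a i.castSucc) (a (Fin.last n)) with hU'
    obtain ⟨W, hWo, hWne, hWsub, hWcross⟩ :=
      myc_shrink_family hDo hDd U' (fun a => hVo _ _) (fun a => hVne _ _)
    have hDsub : ∀ m, m ≤ n + 1 → D ⊆ G m := by
      intro m hm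
      exact iInter_subset (fun k : Fin (n+2) => G k.1) ⟨m, by omega⟩
    have hWparent : ∀ a : Fin (n+1) → Bool,
        closure (W a) ⊆ f (fun i : Fin n => a i.castSucc) := by
      intro a z hz
      exact hVsub _ _ ((closure_mono (hWsub a)) hz)
    refine ⟨⟨W, hWo, hWne, ?_, ?_⟩, ?_⟩
    · intro s t hst
      by_cases hpar : (fun i : Fin n => s i.castSucc) = (fun i : Fin n => t i.castSucc)
      · have hlast : s (Fin.last n) ≠ t (Fin.last n) := by
          intro hl
          apply hst
          funext j
          induction j using Fin.lastCases with
          | last => exact hl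
          | cast i => exact congrFun hpar i
        have hsib := hVdisj (fun i : Fin n => s i.castSucc)
        have h1 : closure (W s) ⊆ closure (V (fun i : Fin n => s i.castSucc) (s (Fin.last n))) :=
          closure_mono (hWsub s)
        have h2 : closure (W t) ⊆ closure (V (fun i : Fin n => t i.castSucc) (t (Fin.last n))) :=
          closure_mono (hWsub t)
        rw [← hpar] at h2
        rcases Bool.eq_false_or_eq_true (s (Fin.last n)) with hs1 | hs1 <;>
          rcases Bool.eq_false_or_eq_true (t (Fin.last n)) with ht1 | ht1 <;>
          rw [hs1] at h1 <;> rw [ht1] at h2 <;>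
          first
            | (exact absurd (hs1.trans ht1.symm) hlast)
            | (exact hsib.mono h1 h2)
            | (exact hsib.symm.mono h1 h2)
      · exact (hfdisj _ _ hpar).mono ((hWparent s).trans subset_closure)
          ((hWparent t).trans subset_closure)
    · intro s t hst m hm
      exact (Set.prod_mono subset_rfl subset_rfl).trans
        ((hWcross s t hst).trans (hDsub m hm))
    · intro s i
      have h1 : (fun j : Fin n => (Fin.snoc s i : Fin (n+1) → Bool) j.castSucc) = s := by
        funext j; simp [Fin.snoc_castSucc]
      have := hWparent (Fin.snoc s i)
      rwa [h1] at this
  choose step hstepP using hstep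
  let sch : ∀ n, Sch n := fun n => Nat.rec base step n
  have hsch_succ : ∀ n, sch (n+1) = step n (sch n) := fun n => rfl
  set K : (ℕ → Bool) → ℕ → Set X :=
    fun σ n => closure ((sch n).1 (fun i : Fin n => σ i)) with hK
  have hrestr : ∀ (σ : ℕ → Bool) (n : ℕ),
      (fun i : Fin (n+1) => σ i) = Fin.snoc (fun i : Fin n => σ i) (σ n) := by
    intro σ n
    funext j
    induction j using Fin.lastCases with
    | last => simp [Fin.snoc_last, Fin.val_last]
    | cast i => simp [Fin.snoc_castSucc, Fin.coe_castSucc]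
  have hKnested : ∀ σ n, K σ (n+1) ⊆ K σ n := by
    intro σ n
    have h := hstepP n (sch n) (fun i : Fin n => σ i) (σ n)
    rw [← hrestr σ n] at h
    have h2 : K σ (n+1) ⊆ (sch n).1 (fun i : Fin n => σ i) := by
      show closure ((sch (n+1)).1 (fun i : Fin (n+1) => σ i)) ⊆ _
      rw [hsch_succ]
      exact h
    exact h2.trans subset_closure
  have hKne : ∀ σ n, (K σ n).Nonempty := fun σ n => ((sch n).2.2.1 _).closure
  have hKclosed : ∀ σ n, IsClosed (K σ n) := fun σ n => isClosed_closure
  have hKinter : ∀ σ, (⋂ n, K σ n).Nonempty := by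
    intro σ
    exact IsCompact.nonempty_iInter_of_sequence_nonempty_isCompact_isClosed (K σ)
      (hKnested σ) (hKne σ) (hKclosed σ 0).isCompact (hKclosed σ)
  choose x hx using hKinter
  have hxmem : ∀ σ n, x σ ∈ K σ n := fun σ n => mem_iInter.1 (hx σ) n
  have hinj : Function.Injective x := by
    intro σ τ hxy
    by_contra hne
    obtain ⟨k, hk⟩ : ∃ k, σ k ≠ τ k := by
      by_contra hall
      push_neg at hall
      exact hne (funext hall)
    have hdiff : (fun i : Fin (k+1) => σ i) ≠ (fun i : Fin (k+1) => τ i) := by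
      intro h
      exact hk (congrFun h ⟨k, k.lt_succ_self⟩)
    have hdisj := (sch (k+1)).2.2.2.1 _ _ hdiff
    exact Set.disjoint_left.1 hdisj (hxmem σ (k+1)) (hxy ▸ hxmem τ (k+1))
  refine ⟨Set.range x, ?_, ?_⟩
  · intro hc
    haveI := hc.to_subtype
    have hinj' : Function.Injective
        (fun σ : ℕ → Bool => (⟨x σ, mem_range_self σ⟩ : Set.range x)) :=
      fun σ τ h => hinj (Subtype.ext_iff.1 h)
    haveI : Countable (ℕ → Bool) := Function.Injective.countable hinj'
    obtain ⟨e, he⟩ := exists_injective_nat (ℕ → Bool)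
    have hsetinj : Function.Injective (fun s : Set ℕ => e (fun n => decide (n ∈ s))) := by
      intro s t h
      have := he h
      ext n
      have := congrFun this n
      simpa using this
    exact Function.cantor_injective _ hsetinj
  · rintro x₁ ⟨σ, rfl⟩ x₂ ⟨τ, rfl⟩ hne m
    have hστ : σ ≠ τ := fun h => hne (h ▸ rfl)
    obtain ⟨k, hk⟩ : ∃ k, σ k ≠ τ k := by
      by_contra hall
      push_neg at hall
      exact hστ (funext hall)
    set n := max (k+1) m with hn
    have hdiff : (fun i : Fin n => σ i) ≠ (fun i : Fin n => τ i) := by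
      intro h
      exact hk (congrFun h ⟨k, by omega⟩)
    have hcross := (sch n).2.2.2.2 _ _ hdiff m (le_max_right _ _)
    exact hcross ⟨hxmem σ n, hxmem τ n⟩

/-- Topological transitivity on a perfect compact metric space gives arbitrarily
large hitting times. -/
private lemma trans_ge {Y : Type*} [MetricSpace Y] [CompactSpace Y]
    (F : Y → Y) (hF : Continuous F)
    (hperf : ∀ y : Y, ∀ ε > 0, ∃ z, z ≠ y ∧ dist z y < ε)
    (htrans : ∀ U V : Set Y, IsOpen U → IsOpen V → U.Nonempty → V.Nonempty →
      ∃ n : ℕ, ∃ u ∈ U, F^[n] u ∈ V) :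
    ∀ U V : Set Y, IsOpen U → IsOpen V → U.Nonempty → V.Nonempty → ∀ N : ℕ,
      ∃ n : ℕ, N ≤ n ∧ ∃ u ∈ U, F^[n] u ∈ V := by
  obtain ⟨bB, hbc, hbne, hbasis⟩ := exists_countable_basis Y
  haveI := hbc.to_subtype
  set O : Set Y → Set Y := fun V => ⋃ n : ℕ, F^[n] ⁻¹' V with hO
  have hOopen : ∀ V ∈ bB, IsOpen (O V) :=
    fun V hV => isOpen_iUnion fun n => (hF.iterate n).isOpen_preimage _ (hbasis.isOpen hV)
  have hOdense : ∀ V ∈ bB, Dense (O V) := by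
    intro V hV
    rw [dense_iff_inter_open]
    intro U hU hUne
    have hVne : V.Nonempty := Set.nonempty_iff_ne_empty.2 (fun h => hbne (h ▸ hV))
    obtain ⟨n, u, hu, hun⟩ := htrans U V hU (hbasis.isOpen hV) hUne hVne
    exact ⟨u, hu, mem_iUnion.2 ⟨n, hun⟩⟩
  set D : Set Y := ⋂ V : bB, O V.1 with hD
  have hDdense : Dense D :=
    dense_iInter_of_isOpen (fun V => hOopen V.1 V.2) (fun V => hOdense V.1 V.2)
  have hDorbit : ∀ y ∈ D, Dense (Set.range fun n => F^[n] y) := by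
    intro y hy
    rw [dense_iff_inter_open]
    intro W hW hWne
    obtain ⟨w, hw⟩ := hWne
    obtain ⟨V, hVb, hwV, hVW⟩ := hbasis.exists_subset_of_mem_open hw hW
    have : y ∈ O V := mem_iInter.1 hy ⟨V, hVb⟩
    obtain ⟨n, hn⟩ := mem_iUnion.1 this
    exact ⟨F^[n] y, hVW hn, mem_range_self n⟩
  intro U V hU hV hUne hVne N
  obtain ⟨y, hyU, hyD⟩ := hDdense.inter_open_nonempty U hU hUne
  have horb := hDorbit y hyD
  set S : Set Y := (fun k => F^[k] y) '' {k | k < N} with hS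
  have hSfin : S.Finite := (Set.finite_Iio N).image _
  have htail : Dense ((Set.range fun n => F^[n] y) \ S) :=
    myc_dense_diff_finite hperf horb hSfin
  obtain ⟨z, hzV, hz2⟩ := (dense_iff_inter_open.1 htail) V hV hVne
  obtain ⟨⟨n, rfl⟩, hzS⟩ := hz2
  have hnN : N ≤ n := by
    by_contra h
    exact hzS ⟨n, by simp only [Set.mem_setOf_eq]; omega, rfl⟩
  exact ⟨n, hnN, y, hyU, hzV⟩

end Mycielski

theorem iwanik_weak_mixing_LiYorke_chaotic
    {X : Type*} [MetricSpace X] [CompactSpace X]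
    (T : X → X) (hT : Continuous T)
    (hnontriv : ∃ a b : X, a ≠ b)
    (hwm : ∀ U V : Set (X × X), IsOpen U → IsOpen V → U.Nonempty → V.Nonempty →
      ∃ n : ℕ, ((fun p : X × X => (T p.1, T p.2))^[n] '' U ∩ V).Nonempty) :
    ∃ δ > 0, ∃ C : Set X, ¬ C.Countable ∧
      ∀ x ∈ C, ∀ y ∈ C, x ≠ y →
        Filter.liminf (fun n : ℕ => dist (T^[n] x) (T^[n] y)) Filter.atTop = 0 ∧
        Filter.limsup (fun n : ℕ => dist (T^[n] x) (T^[n] y)) Filter.atTop > δ := by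
  classical
  obtain ⟨a, b, hab⟩ := hnontriv
  haveI : Nonempty X := ⟨a⟩
  set F : X × X → X × X := fun p => (T p.1, T p.2) with hF
  have hFc : Continuous F := (hT.comp continuous_fst).prodMk (hT.comp continuous_snd)
  have hiter : ∀ (n : ℕ) (p : X × X), F^[n] p = (T^[n] p.1, T^[n] p.2) := by
    intro n
    induction n with
    | zero => intro p; simp
    | succ n ih =>
        intro p
        rw [Function.iterate_succ_apply, ih]
        show (T^[n] (T p.1), T^[n] (T p.2)) = _
        rw [← Function.iterate_succ_apply, ← Function.iterate_succ_apply]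
  -- reformulate weak mixing
  have htrans0 : ∀ U V : Set (X × X), IsOpen U → IsOpen V → U.Nonempty → V.Nonempty →
      ∃ n : ℕ, ∃ u ∈ U, F^[n] u ∈ V := by
    intro U V hU hV h1 h2
    obtain ⟨n, p, ⟨u, hu, hup⟩, hpV⟩ := hwm U V hU hV h1 h2
    exact ⟨n, u, hu, hup ▸ hpV⟩
  -- X is perfect
  have perfX : ∀ x : X, ∀ ε > 0, ∃ y, y ≠ x ∧ dist y x < ε := by
    by_contra h
    push_neg at h
    obtain ⟨x, ε, hε, hx⟩ := h
    have hball : Metric.ball x ε = {x} := by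
      apply subset_antisymm
      · intro y hy
        rw [mem_ball] at hy
        by_contra hne
        exact absurd (hx y hne) (not_le.2 hy)
      · intro y hy
        rw [mem_singleton_iff.1 hy, mem_ball, dist_self]
        exact hε
    have hxopen : IsOpen ({x} : Set X) := hball ▸ isOpen_ball
    obtain ⟨c, hc⟩ : ∃ c : X, c ≠ x := by
      by_cases hxa : x = a
      · subst hxa; exact ⟨b, Ne.symm hab⟩
      · exact ⟨a, fun h => hxa h.symm⟩
    have hdxc : 0 < dist x c := dist_pos.2 (Ne.symm hc)
    obtain ⟨n, u, hu, hun⟩ := htrans0 (({x} : Set X) ×ˢ ({x} : Set X))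
      (({x} : Set X) ×ˢ ball c (dist x c))
      (hxopen.prod hxopen) (hxopen.prod isOpen_ball)
      ⟨(x, x), rfl, rfl⟩ ⟨(x, c), rfl, by rw [mem_ball, dist_self]; exact hdxc⟩
    rw [hiter n u] at hun
    simp only [Set.mem_prod, mem_singleton_iff, mem_ball] at hu hun
    obtain ⟨hu1, hu2⟩ := hu
    obtain ⟨hv1, hv2⟩ := hun
    rw [hu1] at hv1
    rw [hu2] at hv2
    rw [hv1] at hv2
    exact absurd hv2 (lt_irrefl _)
  -- X × X is perfect
  have perfY : ∀ p : X × X, ∀ ε > 0, ∃ q, q ≠ p ∧ dist q p < ε := by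
    intro p ε hε
    obtain ⟨y, hy, hyd⟩ := perfX p.1 ε hε
    refine ⟨(y, p.2), fun h => hy (congrArg Prod.fst h), ?_⟩
    rw [Prod.dist_eq]
    simp only [dist_self]
    exact max_lt hyd hε
  have htransge := trans_ge F hFc perfY htrans0
  -- the distance functions along the orbit
  set dfun : ℕ → X × X → ℝ := fun n p => dist (T^[n] p.1) (T^[n] p.2) with hdfun
  have hdcont : ∀ n, Continuous (dfun n) :=
    fun n => ((hT.iterate n).comp continuous_fst).dist ((hT.iterate n).comp continuous_snd)
  set δ : ℝ := dist a b / 4 with hδdef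
  have hδ : 0 < δ := by
    have := dist_pos.2 hab
    rw [hδdef]; linarith
  -- the dense open sets
  set P : ℕ → Set (X × X) := fun m => ⋃ n, ⋃ (_ : m ≤ n), dfun n ⁻¹' Iio (1/(m+1)) with hP
  set Q : ℕ → Set (X × X) := fun m => ⋃ n, ⋃ (_ : m ≤ n), dfun n ⁻¹' Ioi (2*δ) with hQ
  have hPopen : ∀ m, IsOpen (P m) := fun m =>
    isOpen_iUnion fun n => isOpen_iUnion fun _ => (hdcont n).isOpen_preimage _ isOpen_Iio
  have hQopen : ∀ m, IsOpen (Q m) := fun m =>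
    isOpen_iUnion fun n => isOpen_iUnion fun _ => (hdcont n).isOpen_preimage _ isOpen_Ioi
  have hPdense : ∀ m, Dense (P m) := by
    intro m
    rw [dense_iff_inter_open]
    intro U hU hUne
    set V : Set (X × X) := (fun p : X × X => dist p.1 p.2) ⁻¹' Iio (1/(m+1)) with hV
    have hVo : IsOpen V :=
      (continuous_fst.dist continuous_snd).isOpen_preimage _ isOpen_Iio
    have hVne : V.Nonempty := ⟨(a, a), by
      simp only [hV, mem_preimage, mem_Iio, dist_self]
      positivity⟩
    obtain ⟨n, hn, u, hu, hun⟩ := htransge U V hU hVo hUne hVne m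
    rw [hiter n u] at hun
    refine ⟨u, hu, mem_iUnion.2 ⟨n, mem_iUnion.2 ⟨hn, ?_⟩⟩⟩
    exact hun
  have hQdense : ∀ m, Dense (Q m) := by
    intro m
    rw [dense_iff_inter_open]
    intro U hU hUne
    set V : Set (X × X) := ball a δ ×ˢ ball b δ with hV
    have hVo : IsOpen V := isOpen_ball.prod isOpen_ball
    have hVne : V.Nonempty := ⟨(a, b), by
      constructor <;> rw [mem_ball, dist_self] <;> exact hδ⟩
    obtain ⟨n, hn, u, hu, hun⟩ := htransge U V hU hVo hUne hVne m
    rw [hiter n u] at hun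
    obtain ⟨h1, h2⟩ := hun
    rw [mem_ball] at h1 h2
    refine ⟨u, hu, mem_iUnion.2 ⟨n, mem_iUnion.2 ⟨hn, ?_⟩⟩⟩
    show dfun n u ∈ Ioi (2*δ)
    rw [mem_Ioi]
    have htri := dist_triangle4 a (T^[n] u.1) (T^[n] u.2) b
    have hd1 : dist a (T^[n] u.1) < δ := by rw [dist_comm]; exact h1
    have hd2 : dist (T^[n] u.2) b < δ := h2
    have : dist a b = 4 * δ := by rw [hδdef]; ring
    show 2*δ < dist (T^[n] u.1) (T^[n] u.2)
    linarith
  set G : ℕ → Set (X × X) := fun m => P m ∩ Q m with hG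
  have hGo : ∀ m, IsOpen (G m) := fun m => (hPopen m).inter (hQopen m)
  have hGd : ∀ m, Dense (G m) := fun m =>
    Dense.inter_of_isOpen_left (hPdense m) (hQdense m) (hPopen m)
  obtain ⟨C, hCunc, hCpairs⟩ := mycielski_main perfX G hGo hGd
  refine ⟨δ, hδ, C, hCunc, ?_⟩
  intro x hx y hy hne
  have hGm := hCpairs x hx y hy hne
  set d : ℕ → ℝ := fun n => dist (T^[n] x) (T^[n] y) with hd
  -- boundedness
  obtain ⟨Cb, hCb⟩ := Metric.isBounded_iff.1 ((isCompact_univ (X := X)).isBounded)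
  have hbdd : Filter.IsBoundedUnder (· ≤ ·) Filter.atTop d :=
    Filter.isBoundedUnder_of ⟨Cb, fun n => hCb (mem_univ _) (mem_univ _)⟩
  have hbdd_below : Filter.IsBoundedUnder (· ≥ ·) Filter.atTop d :=
    Filter.isBoundedUnder_of ⟨0, fun n => dist_nonneg⟩
  -- membership unpacking
  have hPmem : ∀ m N : ℕ, ∃ n, N ≤ n ∧ d n < 1/(m+1) := by
    intro m N
    have := (hGm (max m N)).1
    rw [hP] at this
    simp only [mem_iUnion] at this
    obtain ⟨n, hn, hlt⟩ := this
    rw [mem_preimage, mem_Iio] at hlt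
    refine ⟨n, le_trans (le_max_right m N) hn, lt_of_lt_of_le hlt ?_⟩
    apply one_div_le_one_div_of_le
    · positivity
    · have h := (Nat.cast_le (α := ℝ)).2 (le_max_left m N)
      linarith
  have hQmem : ∀ N : ℕ, ∃ n, N ≤ n ∧ 2*δ < d n := by
    intro N
    have := (hGm N).2
    rw [hQ] at this
    simp only [mem_iUnion] at this
    obtain ⟨n, hn, hlt⟩ := this
    rw [mem_preimage, mem_Ioi] at hlt
    exact ⟨n, hn, hlt⟩
  constructor
  · -- liminf = 0
    apply le_antisymm
    · refine le_of_forall_pos_le_add (fun ε hε => ?_)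
      rw [zero_add]
      obtain ⟨m, hm⟩ := exists_nat_one_div_lt hε
      refine Filter.liminf_le_of_frequently_le ?_ hbdd_below
      rw [Filter.frequently_atTop]
      intro N
      obtain ⟨n, hn, hlt⟩ := hPmem m N
      exact ⟨n, hn, le_of_lt (lt_trans hlt hm)⟩
    · exact Filter.le_liminf_of_le hbdd.isCoboundedUnder_ge
        (Filter.Eventually.of_forall fun n => dist_nonneg)
  · -- limsup > δ
    have hfreq : ∃ᶠ n in Filter.atTop, 2*δ ≤ d n := by
      rw [Filter.frequently_atTop]
      intro N
      obtain ⟨n, hn, hlt⟩ := hQmem N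
      exact ⟨n, hn, le_of_lt hlt⟩
    have h2δ := Filter.le_limsup_of_frequently_le hfreq hbdd
    have : δ < 2*δ := by linarith
    exact lt_of_lt_of_le this h2δ
end

section
/- Let (X,T) be a transitive dynamical system on a compact metric space. Then exactly one of the following holds: (a) there exists a transitive point which is a mean equicontinuity point, or (b) (X,T) is mean sensitive, i.e., there exists δ > 0 such that for every x ∈ X and every neighborhood U of x there is y ∈ U with limsup_{n→∞} (1/n) Σ_{i=0}^{n-1} d(T^i x, T^i y) > δ. -/
open Filter Finset Set

namespace MeanEqDich

variable {X : Type*} [MetricSpace X]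

noncomputable def mAvg (T : X → X) (x y : X) (n : ℕ) : ℝ :=
  (∑ i ∈ Finset.range n, dist (T^[i] x) (T^[i] y)) / n

noncomputable def mD (T : X → X) (x y : X) : ℝ := limsup (mAvg T x y) atTop

lemma mAvg_nonneg (T : X → X) (x y : X) (n : ℕ) : 0 ≤ mAvg T x y n :=
  div_nonneg (Finset.sum_nonneg fun _ _ => dist_nonneg) (Nat.cast_nonneg n)

variable {C : ℝ} {T : X → X}

lemma mAvg_le (hC0 : 0 ≤ C) (hC : ∀ a b : X, dist a b ≤ C) (T : X → X) (x y : X) (n : ℕ) :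
    mAvg T x y n ≤ C := by
  rcases Nat.eq_zero_or_pos n with h | h
  · simp [mAvg, h, hC0]
  · have hn : (0:ℝ) < n := by exact_mod_cast h
    rw [mAvg, div_le_iff₀ hn]
    calc ∑ i ∈ Finset.range n, dist (T^[i] x) (T^[i] y)
        ≤ ∑ _i ∈ Finset.range n, C := Finset.sum_le_sum fun i _ => hC _ _
      _ = C * n := by rw [Finset.sum_const, Finset.card_range, nsmul_eq_mul, mul_comm]

lemma mAvg_bddAbove (hC0 : 0 ≤ C) (hC : ∀ a b : X, dist a b ≤ C) (T : X → X) (x y : X) :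
    IsBoundedUnder (· ≤ ·) atTop (mAvg T x y) :=
  isBoundedUnder_of ⟨C, fun n => mAvg_le hC0 hC T x y n⟩

lemma mAvg_bddBelow (T : X → X) (x y : X) : IsBoundedUnder (· ≥ ·) atTop (mAvg T x y) :=
  isBoundedUnder_of ⟨0, fun n => mAvg_nonneg T x y n⟩

lemma mAvg_cobdd (T : X → X) (x y : X) : IsCoboundedUnder (· ≤ ·) atTop (mAvg T x y) :=
  (mAvg_bddBelow T x y).isCoboundedUnder_le

lemma mD_symm (T : X → X) (x y : X) : mD T x y = mD T y x := by
  have h : mAvg T x y = mAvg T y x := by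
    funext n; simp [mAvg, dist_comm]
  rw [mD, mD, h]

lemma mD_triangle (hC0 : 0 ≤ C) (hC : ∀ a b : X, dist a b ≤ C) (T : X → X) (x y z : X) :
    mD T x z ≤ mD T x y + mD T y z := by
  have hpt : ∀ n, mAvg T x z n ≤ mAvg T x y n + mAvg T y z n := by
    intro n
    rcases Nat.eq_zero_or_pos n with h | h
    · simp [mAvg, h]
    · have hn : (0:ℝ) < n := by exact_mod_cast h
      rw [mAvg, mAvg, mAvg, ← add_div, div_le_div_iff_of_pos_right hn,
        ← Finset.sum_add_distrib]
      exact Finset.sum_le_sum fun i _ => dist_triangle _ _ _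
  calc mD T x z ≤ limsup (fun n => mAvg T x y n + mAvg T y z n) atTop := by
        refine limsup_le_limsup (Eventually.of_forall hpt) (mAvg_cobdd T x z) ?_
        exact isBoundedUnder_le_add (mAvg_bddAbove hC0 hC T x y) (mAvg_bddAbove hC0 hC T y z)
    _ ≤ mD T x y + mD T y z :=
        limsup_add_le (mAvg_bddBelow T x y) (mAvg_bddAbove hC0 hC T x y)
          (mAvg_cobdd T y z) (mAvg_bddAbove hC0 hC T y z)

lemma mD_le_mD_apply (hC0 : 0 ≤ C) (hC : ∀ a b : X, dist a b ≤ C) (T : X → X) (x y : X) :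
    mD T x y ≤ mD T (T x) (T y) := by
  refine le_of_forall_pos_le_add fun ε hε => ?_
  have hev : ∀ᶠ n : ℕ in atTop, mAvg T x y n ≤ mAvg T (T x) (T y) n + ε := by
    have h1 : Tendsto (fun n : ℕ => C / n) atTop (nhds 0) :=
      tendsto_const_div_atTop_nhds_zero_nat C
    filter_upwards [h1.eventually_lt_const hε, eventually_ge_atTop 1] with n hlt hn1
    have key : mAvg T x y n ≤ mAvg T (T x) (T y) n + C / n := by
      obtain ⟨m, rfl⟩ : ∃ m, n = m + 1 := ⟨n - 1, by omega⟩
      have hS : (∑ i ∈ Finset.range (m+1), dist (T^[i] x) (T^[i] y))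
          = (∑ i ∈ Finset.range m, dist (T^[i] (T x)) (T^[i] (T y))) + dist x y := by
        rw [Finset.sum_range_succ']
        simp [Function.iterate_succ_apply]
      have hS' : (∑ i ∈ Finset.range m, dist (T^[i] (T x)) (T^[i] (T y)))
          ≤ ∑ i ∈ Finset.range (m+1), dist (T^[i] (T x)) (T^[i] (T y)) := by
        rw [Finset.sum_range_succ]
        exact le_add_of_nonneg_right dist_nonneg
      have hpos : (0:ℝ) < (m+1 : ℕ) := by positivity
      rw [mAvg, mAvg, hS, ← add_div, div_le_div_iff_of_pos_right hpos]
      have := hC x y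
      linarith
    have : C / n ≤ ε := le_of_lt hlt
    linarith
  calc mD T x y ≤ limsup (fun n => mAvg T (T x) (T y) n + ε) atTop := by
        refine limsup_le_limsup hev (mAvg_cobdd T x y) ?_
        exact isBoundedUnder_le_add (mAvg_bddAbove hC0 hC T (T x) (T y)) (isBoundedUnder_of ⟨ε, fun _ => le_rfl⟩)
    _ = mD T (T x) (T y) + ε :=
        limsup_add_const atTop _ ε (mAvg_bddAbove hC0 hC T (T x) (T y))
          (mAvg_cobdd T (T x) (T y))

lemma mD_le_mD_iterate (hC0 : 0 ≤ C) (hC : ∀ a b : X, dist a b ≤ C) (T : X → X) (x y : X)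
    (n : ℕ) : mD T x y ≤ mD T (T^[n] x) (T^[n] y) := by
  induction n with
  | zero => simp
  | succ n ih =>
      rw [Function.iterate_succ_apply', Function.iterate_succ_apply']
      exact ih.trans (mD_le_mD_apply hC0 hC T _ _)

end MeanEqDich

open MeanEqDich

theorem transitive_mean_equicontinuity_dichotomy
    {X : Type*} [MetricSpace X] [CompactSpace X]
    (T : X → X) (hT : Continuous T)
    (htrans : ∀ U V : Set X, IsOpen U → IsOpen V → U.Nonempty → V.Nonempty →
      ∃ n : ℕ, (T^[n] '' U ∩ V).Nonempty) :
    Xor'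
      (∃ x : X, Dense {y : X | ∃ n : ℕ, y = T^[n] x} ∧
        ∀ ε > 0, ∃ δ > 0, ∀ y : X, dist x y < δ →
          Filter.limsup (fun n : ℕ =>
            (∑ i ∈ Finset.range n, dist (T^[i] x) (T^[i] y)) / n) Filter.atTop < ε)
      (∃ δ > 0, ∀ x : X, ∀ U : Set X, IsOpen U → x ∈ U →
        ∃ y ∈ U, Filter.limsup (fun n : ℕ =>
          (∑ i ∈ Finset.range n, dist (T^[i] x) (T^[i] y)) / n) Filter.atTop > δ) := by
  -- boundedness of the metric
  have hb : Bornology.IsBounded (Set.univ : Set X) := isCompact_univ.isBounded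
  obtain ⟨C₀, hC₀⟩ := Metric.isBounded_iff.1 hb
  set C : ℝ := max C₀ 0 with hCdef
  have hC0 : 0 ≤ C := le_max_right _ _
  have hC : ∀ a b : X, dist a b ≤ C := fun a b =>
    le_trans (hC₀ trivial trivial) (le_max_left _ _)
  -- restate limsup expressions via mD
  have hDeq : ∀ x y : X,
      Filter.limsup (fun n : ℕ =>
        (∑ i ∈ Finset.range n, dist (T^[i] x) (T^[i] y)) / n) Filter.atTop = mD T x y := by
    intro x y; rfl
  -- mutual exclusion
  have hnot : ¬ ((∃ x : X, Dense {y : X | ∃ n : ℕ, y = T^[n] x} ∧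
        ∀ ε > 0, ∃ δ > 0, ∀ y : X, dist x y < δ →
          Filter.limsup (fun n : ℕ =>
            (∑ i ∈ Finset.range n, dist (T^[i] x) (T^[i] y)) / n) Filter.atTop < ε) ∧
      (∃ δ > 0, ∀ x : X, ∀ U : Set X, IsOpen U → x ∈ U →
        ∃ y ∈ U, Filter.limsup (fun n : ℕ =>
          (∑ i ∈ Finset.range n, dist (T^[i] x) (T^[i] y)) / n) Filter.atTop > δ)) := by
    rintro ⟨⟨x, -, hx⟩, δ, hδ, hsens⟩
    obtain ⟨δ', hδ', hδ'prop⟩ := hx δ hδ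
    obtain ⟨y, hy, hgt⟩ := hsens x (Metric.ball x δ') Metric.isOpen_ball
      (Metric.mem_ball_self hδ')
    have : dist x y < δ' := by rw [dist_comm]; exact Metric.mem_ball.1 hy
    exact absurd (hδ'prop y this) (not_lt.2 (le_of_lt hgt))
  -- main implication: ¬ sensitive → exists transitive mean equicontinuity point
  have himp : ¬ (∃ δ > 0, ∀ x : X, ∀ U : Set X, IsOpen U → x ∈ U →
        ∃ y ∈ U, Filter.limsup (fun n : ℕ =>
          (∑ i ∈ Finset.range n, dist (T^[i] x) (T^[i] y)) / n) Filter.atTop > δ) →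
      (∃ x : X, Dense {y : X | ∃ n : ℕ, y = T^[n] x} ∧
        ∀ ε > 0, ∃ δ > 0, ∀ y : X, dist x y < δ →
          Filter.limsup (fun n : ℕ =>
            (∑ i ∈ Finset.range n, dist (T^[i] x) (T^[i] y)) / n) Filter.atTop < ε) := by
    intro hB
    push_neg at hB
    -- X is nonempty
    have hne : Nonempty X := by
      by_contra h
      rw [not_nonempty_iff] at h
      obtain ⟨x, -⟩ := hB 1 one_pos
      exact h.elim x
    -- the sets E δ
    set E : ℝ → Set X := fun δ =>
      {x | ∃ U : Set X, IsOpen U ∧ x ∈ U ∧ ∀ y ∈ U, ∀ z ∈ U, mD T y z ≤ δ} with hEdef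
    have hEopen : ∀ δ, IsOpen (E δ) := by
      intro δ
      rw [isOpen_iff_mem_nhds]
      rintro x ⟨U, hUo, hxU, hU⟩
      exact Filter.mem_of_superset (hUo.mem_nhds hxU)
        (fun u hu => ⟨U, hUo, hu, hU⟩)
    have hEinv : ∀ δ (n : ℕ) (x : X), T^[n] x ∈ E δ → x ∈ E δ := by
      rintro δ n x ⟨U, hUo, hxU, hU⟩
      refine ⟨(T^[n]) ⁻¹' U, hUo.preimage (hT.iterate n), hxU, fun y hy z hz => ?_⟩
      exact le_trans (mD_le_mD_iterate hC0 hC T y z n) (hU _ hy _ hz)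
    have hEdense : ∀ δ : ℝ, 0 < δ → Dense (E δ) := by
      intro δ hδ
      rw [dense_iff_inter_open]
      intro V hVo hVne
      -- E δ is nonempty
      obtain ⟨x₀, U₀, hU₀o, hx₀, hU₀⟩ := hB (δ/2) (by linarith)
      have hx₀E : x₀ ∈ E δ := by
        refine ⟨U₀, hU₀o, hx₀, fun y hy z hz => ?_⟩
        have h1 : mD T x₀ y ≤ δ/2 := (hDeq x₀ y) ▸ hU₀ y hy
        have h2 : mD T x₀ z ≤ δ/2 := (hDeq x₀ z) ▸ hU₀ z hz
        calc mD T y z ≤ mD T y x₀ + mD T x₀ z := mD_triangle hC0 hC T y x₀ z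
          _ = mD T x₀ y + mD T x₀ z := by rw [mD_symm T y x₀]
          _ ≤ δ/2 + δ/2 := add_le_add h1 h2
          _ = δ := by ring
      obtain ⟨n, w, ⟨v, hvV, hvw⟩, hwE⟩ := htrans V (E δ) hVo (hEopen δ) hVne ⟨x₀, hx₀E⟩
      exact ⟨v, hvV, hEinv δ n v (hvw ▸ hwE)⟩
    -- dense Gδ of "uniformly mean stable" points
    set G : Set X := ⋂ k : ℕ, E (1/(k+1)) with hGdef
    have hGdense : Dense G :=
      dense_iInter_of_isOpen (fun k => hEopen _) (fun k => hEdense _ (by positivity))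
    have hGgd : IsGδ G := IsGδ.iInter fun k => (hEopen _).isGδ
    -- dense Gδ of transitive points
    obtain ⟨B, hBc, hBne, hBbasis⟩ := TopologicalSpace.exists_countable_basis X
    set W : Set X → Set X := fun b => ⋃ n : ℕ, (T^[n]) ⁻¹' b with hWdef
    have hWopen : ∀ b ∈ B, IsOpen (W b) := fun b hb =>
      isOpen_iUnion fun n => (hBbasis.isOpen hb).preimage (hT.iterate n)
    have hWdense : ∀ b ∈ B, Dense (W b) := by
      intro b hb
      rw [dense_iff_inter_open]
      intro V hVo hVne
      have hbne : b.Nonempty := nonempty_iff_ne_empty.2 (fun h => hBne (h ▸ hb))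
      obtain ⟨n, w, ⟨v, hvV, hvw⟩, hwb⟩ := htrans V b hVo (hBbasis.isOpen hb) hVne hbne
      exact ⟨v, hvV, Set.mem_iUnion.2 ⟨n, by rw [Set.mem_preimage, hvw]; exact hwb⟩⟩
    set Gt : Set X := ⋂ b ∈ B, W b with hGtdef
    have hGtdense : Dense Gt := dense_biInter_of_isOpen hWopen hBc hWdense
    have hGtgd : IsGδ Gt := IsGδ.biInter hBc fun b hb => (hWopen b hb).isGδ
    obtain ⟨x, hxGt, hxG⟩ := (Dense.inter_of_Gδ hGtgd hGgd hGtdense hGdense).nonempty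
    refine ⟨x, ?_, ?_⟩
    · -- transitive point
      rw [dense_iff_inter_open]
      intro V hVo hVne
      obtain ⟨v, hv⟩ := hVne
      obtain ⟨b, hbB, hvb, hbV⟩ := hBbasis.exists_subset_of_mem_open hv hVo
      have hxW : x ∈ W b := Set.mem_iInter₂.1 hxGt b hbB
      obtain ⟨n, hn⟩ := Set.mem_iUnion.1 hxW
      exact ⟨T^[n] x, hbV hn, ⟨n, rfl⟩⟩
    · -- mean equicontinuity point
      intro ε hε
      obtain ⟨k, hk⟩ := exists_nat_one_div_lt hε
      have hxE : x ∈ E (1/(k+1)) := Set.mem_iInter.1 hxG k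
      obtain ⟨U, hUo, hxU, hU⟩ := hxE
      obtain ⟨r, hr, hrU⟩ := Metric.isOpen_iff.1 hUo x hxU
      refine ⟨r, hr, fun y hy => ?_⟩
      have hyU : y ∈ U := hrU (by rw [Metric.mem_ball, dist_comm]; exact hy)
      rw [hDeq]
      calc mD T x y ≤ 1/(k+1) := hU x hxU y hyU
        _ < ε := by exact_mod_cast hk
  -- assemble the Xor'
  by_cases hB : (∃ δ > 0, ∀ x : X, ∀ U : Set X, IsOpen U → x ∈ U →
        ∃ y ∈ U, Filter.limsup (fun n : ℕ =>
          (∑ i ∈ Finset.range n, dist (T^[i] x) (T^[i] y)) / n) Filter.atTop > δ)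
  · exact Or.inr ⟨hB, fun hA => hnot ⟨hA, hB⟩⟩
  · exact Or.inl ⟨himp hB, hB⟩
end

section
/- Let (X,T) be a dynamical system on a compact metric space, and let (K(X), T_K) be the induced system on the hyperspace of non-empty closed subsets of X with the Hausdorff metric, where T_K(A) = T(A). Then (X,T) is weakly mixing if and only if (K(X), T_K) is topologically transitive. -/
open TopologicalSpace Metric EMetric Set
set_option linter.unusedSectionVars false

namespace WMHypAux

variable {X : Type*} [MetricSpace X] [CompactSpace X]

lemma pair_iterate (T : X → X) (n : ℕ) (p : X × X) :
    (fun p : X × X => (T p.1, T p.2))^[n] p = (T^[n] p.1, T^[n] p.2) := by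
  induction n generalizing p with
  | zero => simp
  | succ n ih =>
    rw [Function.iterate_succ_apply, ih, Function.iterate_succ_apply,
      Function.iterate_succ_apply]

lemma tk_iterate (T : X → X) (TK : NonemptyCompacts X → NonemptyCompacts X)
    (hTK : ∀ A : NonemptyCompacts X, (TK A : Set X) = T '' (A : Set X))
    (n : ℕ) (A : NonemptyCompacts X) :
    (TK^[n] A : Set X) = T^[n] '' (A : Set X) := by
  induction n generalizing A with
  | zero => simp
  | succ n ih =>
    rw [Function.iterate_succ_apply, ih, hTK, ← Set.image_comp,
      ← Function.iterate_succ T n]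

lemma mem_close {K L : NonemptyCompacts X} {r : ℝ} (h : dist K L < r) {x : X}
    (hx : x ∈ (K : Set X)) : ∃ y ∈ (L : Set X), dist x y < r := by
  rw [NonemptyCompacts.dist_eq] at h
  have fin : hausdorffEdist (K : Set X) (L : Set X) ≠ ⊤ :=
    hausdorffEdist_ne_top_of_nonempty_of_bounded K.nonempty L.nonempty
      K.isCompact.isBounded L.isCompact.isBounded
  exact exists_dist_lt_of_hausdorffDist_lt hx h fin

lemma isOpen_subsetSet {W : Set X} (hW : IsOpen W) :
    IsOpen {K : NonemptyCompacts X | (K : Set X) ⊆ W} := by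
  rw [Metric.isOpen_iff]
  intro K hK
  obtain ⟨δ, δpos, hδ⟩ := K.isCompact.exists_thickening_subset_open hW hK
  refine ⟨δ, δpos, fun K' hK' => ?_⟩
  intro x hx
  obtain ⟨y, hy, hd⟩ := mem_close (_root_.Metric.mem_ball.1 hK') hx
  exact hδ ((Metric.mem_thickening_iff).2 ⟨y, hy, hd⟩)

lemma isOpen_meets {W : Set X} (hW : IsOpen W) :
    IsOpen {K : NonemptyCompacts X | ((K : Set X) ∩ W).Nonempty} := by
  rw [Metric.isOpen_iff]
  rintro K ⟨x, hxK, hxW⟩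
  obtain ⟨δ, δpos, hball⟩ := Metric.isOpen_iff.1 hW x hxW
  refine ⟨δ, δpos, fun K' hK' => ?_⟩
  have h : dist K K' < δ := by rw [dist_comm]; exact Metric.mem_ball.1 hK'
  obtain ⟨y, hy, hd⟩ := mem_close h hxK
  exact ⟨y, hy, hball (by rw [_root_.Metric.mem_ball, dist_comm]; exact hd)⟩

lemma isOpen_meets_image (T : X → X) (hT : Continuous T) (s : ℕ) {W : Set X} (hW : IsOpen W) :
    IsOpen {K : NonemptyCompacts X | ((T^[s]) '' (K : Set X) ∩ W).Nonempty} := by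
  rw [Metric.isOpen_iff]
  rintro K ⟨x, ⟨c, hcK, rfl⟩, hxW⟩
  obtain ⟨ε, εpos, hball⟩ := Metric.isOpen_iff.1 hW _ hxW
  obtain ⟨δ, δpos, hδ⟩ := Metric.continuous_iff.1 (hT.iterate s) c ε εpos
  refine ⟨δ, δpos, fun K' hK' => ?_⟩
  have h : dist K K' < δ := by rw [dist_comm]; exact Metric.mem_ball.1 hK'
  obtain ⟨y, hy, hd⟩ := mem_close h hcK
  have hmem : T^[s] y ∈ ball (T^[s] c) ε := by
    rw [_root_.Metric.mem_ball]
    exact hδ y (by rw [dist_comm]; exact hd)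
  exact ⟨T^[s] y, ⟨y, hy, rfl⟩, hball hmem⟩


section WM

variable (T : X → X)

/-- weak mixing in pair form -/
lemma wm2
    (wm : ∀ U V : Set (X × X), IsOpen U → IsOpen V → U.Nonempty → V.Nonempty →
      ∃ n : ℕ, ((fun p : X × X => (T p.1, T p.2))^[n] '' U ∩ V).Nonempty)
    {A B C D : Set X} (hA : IsOpen A) (hB : IsOpen B) (hC : IsOpen C) (hD : IsOpen D)
    (hAn : A.Nonempty) (hBn : B.Nonempty) (hCn : C.Nonempty) (hDn : D.Nonempty) :
    ∃ n, (T^[n] '' A ∩ C).Nonempty ∧ (T^[n] '' B ∩ D).Nonempty := by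
  obtain ⟨n, z, ⟨p, hp, hpz⟩, hzV⟩ :=
    wm (A ×ˢ B) (C ×ˢ D) (hA.prod hB) (hC.prod hD) (hAn.prod hBn) (hCn.prod hDn)
  rw [pair_iterate] at hpz
  refine ⟨n, ⟨z.1, ⟨p.1, hp.1, ?_⟩, hzV.1⟩, ⟨z.2, ⟨p.2, hp.2, ?_⟩, hzV.2⟩⟩
  · rw [← hpz]
  · rw [← hpz]

lemma lemF (hT : Continuous T)
    (wm : ∀ U V : Set (X × X), IsOpen U → IsOpen V → U.Nonempty → V.Nonempty →
      ∃ n : ℕ, ((fun p : X × X => (T p.1, T p.2))^[n] '' U ∩ V).Nonempty)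
    {A B C D : Set X} (hA : IsOpen A) (hB : IsOpen B) (hC : IsOpen C) (hD : IsOpen D)
    (hAn : A.Nonempty) (hBn : B.Nonempty) (hCn : C.Nonempty) (hDn : D.Nonempty) :
    ∃ U V : Set X, IsOpen U ∧ IsOpen V ∧ U.Nonempty ∧ V.Nonempty ∧
      ∀ m, (T^[m] '' U ∩ V).Nonempty →
        (T^[m] '' A ∩ B).Nonempty ∧ (T^[m] '' C ∩ D).Nonempty := by
  obtain ⟨n, h1, h2⟩ := wm2 T wm hA hB hC hD hAn hBn hCn hDn
  obtain ⟨z1, ⟨x1, hx1, hz1⟩, hz1C⟩ := h1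
  obtain ⟨z2, ⟨x2, hx2, hz2⟩, hz2D⟩ := h2
  refine ⟨A ∩ T^[n] ⁻¹' C, B ∩ T^[n] ⁻¹' D, hA.inter ((hT.iterate n).isOpen_preimage C hC),
    hB.inter ((hT.iterate n).isOpen_preimage D hD),
    ⟨x1, hx1, by rw [Set.mem_preimage, hz1]; exact hz1C⟩,
    ⟨x2, hx2, by rw [Set.mem_preimage, hz2]; exact hz2D⟩, ?_⟩
  rintro m ⟨w, ⟨u, ⟨huA, huC⟩, hw⟩, hwB, hwD⟩
  constructor
  · exact ⟨w, ⟨u, huA, hw⟩, hwB⟩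
  · refine ⟨T^[m] (T^[n] u), ⟨T^[n] u, huC, rfl⟩, ?_⟩
    have h3 : T^[m] (T^[n] u) = T^[n] (T^[m] u) := by
      rw [← Function.iterate_add_apply, ← Function.iterate_add_apply, Nat.add_comm]
    rw [h3, hw]
    exact hwD

lemma chain (hT : Continuous T)
    (wm : ∀ U V : Set (X × X), IsOpen U → IsOpen V → U.Nonempty → V.Nonempty →
      ∃ n : ℕ, ((fun p : X × X => (T p.1, T p.2))^[n] '' U ∩ V).Nonempty) :
    ∀ (L : List (Set X × Set X)),
    (∀ p ∈ L, IsOpen p.1 ∧ IsOpen p.2 ∧ p.1.Nonempty ∧ p.2.Nonempty) →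
    ∀ A B : Set X, IsOpen A → IsOpen B → A.Nonempty → B.Nonempty →
    ∃ U V : Set X, IsOpen U ∧ IsOpen V ∧ U.Nonempty ∧ V.Nonempty ∧
      ∀ m, (T^[m] '' U ∩ V).Nonempty →
        (T^[m] '' A ∩ B).Nonempty ∧ ∀ p ∈ L, (T^[m] '' p.1 ∩ p.2).Nonempty := by
  intro L
  induction L with
  | nil =>
    intro _ A B hA hB hAn hBn
    exact ⟨A, B, hA, hB, hAn, hBn, fun m hm => ⟨hm, by simp⟩⟩
  | cons p L ih =>
    intro hL A B hA hB hAn hBn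
    obtain ⟨hp1, hp2, hp1n, hp2n⟩ := hL p List.mem_cons_self
    obtain ⟨U1, V1, hU1, hV1, hU1n, hV1n, hkey⟩ :=
      lemF T hT wm hA hB hp1 hp2 hAn hBn hp1n hp2n
    obtain ⟨U, V, hU, hV, hUn, hVn, hrec⟩ :=
      ih (fun q hq => hL q (List.mem_cons_of_mem p hq)) U1 V1 hU1 hV1 hU1n hV1n
    refine ⟨U, V, hU, hV, hUn, hVn, fun m hm => ?_⟩
    obtain ⟨h1, h2⟩ := hrec m hm
    obtain ⟨hAB, hpd⟩ := hkey m h1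
    refine ⟨hAB, fun q hq => ?_⟩
    rcases List.mem_cons.1 hq with h | h
    · rw [h]; exact hpd
    · exact h2 q h

lemma family (hT : Continuous T)
    (wm : ∀ U V : Set (X × X), IsOpen U → IsOpen V → U.Nonempty → V.Nonempty →
      ∃ n : ℕ, ((fun p : X × X => (T p.1, T p.2))^[n] '' U ∩ V).Nonempty)
    (L : List (Set X × Set X))
    (hL : ∀ p ∈ L, IsOpen p.1 ∧ IsOpen p.2 ∧ p.1.Nonempty ∧ p.2.Nonempty)
    {A B : Set X} (hA : IsOpen A) (hB : IsOpen B) (hAn : A.Nonempty) (hBn : B.Nonempty) :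
    ∃ n, (T^[n] '' A ∩ B).Nonempty ∧ ∀ p ∈ L, (T^[n] '' p.1 ∩ p.2).Nonempty := by
  obtain ⟨U, V, hU, hV, hUn, hVn, h⟩ := chain T hT wm L hL A B hA hB hAn hBn
  obtain ⟨n, hn, _⟩ := wm2 T wm hU hU hV hV hUn hUn hVn hVn
  exact ⟨n, h n hn⟩

end WM

end WMHypAux

open TopologicalSpace

open TopologicalSpace Metric EMetric Set WMHypAux in
theorem weaklyMixing_iff_hyperspace_transitive
    {X : Type*} [MetricSpace X] [CompactSpace X]
    (T : X → X) (hT : Continuous T)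
    (TK : NonemptyCompacts X → NonemptyCompacts X)
    (hTK : ∀ A : NonemptyCompacts X, (TK A : Set X) = T '' (A : Set X)) :
    (∀ U V : Set (X × X), IsOpen U → IsOpen V → U.Nonempty → V.Nonempty →
      ∃ n : ℕ, ((fun p : X × X => (T p.1, T p.2))^[n] '' U ∩ V).Nonempty) ↔
    (∀ U V : Set (NonemptyCompacts X), IsOpen U → IsOpen V → U.Nonempty → V.Nonempty →
      ∃ n : ℕ, (TK^[n] '' U ∩ V).Nonempty) := by
  constructor
  · rintro wm 𝒰 𝒱 hU hV ⟨KA, hKA⟩ ⟨KB, hKB⟩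
    classical
    obtain ⟨εU, εUpos, hballU⟩ := Metric.isOpen_iff.1 hU KA hKA
    obtain ⟨εV, εVpos, hballV⟩ := Metric.isOpen_iff.1 hV KB hKB
    set ε : ℝ := min εU εV with hε
    have εpos : 0 < ε := lt_min εUpos εVpos
    set δ : ℝ := ε / 3 with hδdef
    have δpos : 0 < δ := by positivity
    obtain ⟨a0, ha0⟩ := KA.nonempty
    obtain ⟨b0, hb0⟩ := KB.nonempty
    obtain ⟨tA, htAs, htAfin, htAcov⟩ := KA.isCompact.finite_cover_balls δpos
    obtain ⟨tB, htBs, htBfin, htBcov⟩ := KB.isCompact.finite_cover_balls δpos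
    set L : List (Set X × Set X) :=
      (htAfin.toFinset.toList.map fun a => (Metric.ball a δ, Metric.ball b0 δ)) ++
      (htBfin.toFinset.toList.map fun b => (Metric.ball a0 δ, Metric.ball b δ)) with hLdef
    have hL : ∀ p ∈ L, IsOpen p.1 ∧ IsOpen p.2 ∧ p.1.Nonempty ∧ p.2.Nonempty := by
      intro p hp
      rcases List.mem_append.1 hp with h | h <;>
      · obtain ⟨a, _, rfl⟩ := List.mem_map.1 h
        exact ⟨Metric.isOpen_ball, Metric.isOpen_ball,
          Metric.nonempty_ball.2 δpos, Metric.nonempty_ball.2 δpos⟩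
    obtain ⟨n, -, hall⟩ := family T hT wm L hL Metric.isOpen_ball Metric.isOpen_ball
      (Metric.nonempty_ball.2 δpos) (Metric.nonempty_ball.2 δpos) (A := Metric.ball a0 δ)
      (B := Metric.ball b0 δ)
    have exA : ∀ a ∈ tA, ∃ z, z ∈ Metric.ball a δ ∧ T^[n] z ∈ Metric.ball b0 δ := by
      intro a ha
      have hmem : (Metric.ball a δ, Metric.ball b0 δ) ∈ L :=
        List.mem_append.2 (Or.inl (List.mem_map.2 ⟨a, by simpa using ha, rfl⟩))
      obtain ⟨w, ⟨z, hz, rfl⟩, hw⟩ := hall _ hmem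
      exact ⟨z, hz, hw⟩
    have exB : ∀ b ∈ tB, ∃ z, z ∈ Metric.ball a0 δ ∧ T^[n] z ∈ Metric.ball b δ := by
      intro b hb
      have hmem : (Metric.ball a0 δ, Metric.ball b δ) ∈ L :=
        List.mem_append.2 (Or.inr (List.mem_map.2 ⟨b, by simpa using hb, rfl⟩))
      obtain ⟨w, ⟨z, hz, rfl⟩, hw⟩ := hall _ hmem
      exact ⟨z, hz, hw⟩
    set f : X → X := fun a =>
      if h : ∃ z, z ∈ Metric.ball a δ ∧ T^[n] z ∈ Metric.ball b0 δ then h.choose else a0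
      with hfdef
    set g : X → X := fun b =>
      if h : ∃ z, z ∈ Metric.ball a0 δ ∧ T^[n] z ∈ Metric.ball b δ then h.choose else a0
      with hgdef
    have hf : ∀ a ∈ tA, f a ∈ Metric.ball a δ ∧ T^[n] (f a) ∈ Metric.ball b0 δ := by
      intro a ha
      have h := exA a ha
      rw [hfdef]
      simp only [dif_pos h]
      exact h.choose_spec
    have hg : ∀ b ∈ tB, g b ∈ Metric.ball a0 δ ∧ T^[n] (g b) ∈ Metric.ball b δ := by
      intro b hb
      have h := exB b hb
      rw [hgdef]
      simp only [dif_pos h]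
      exact h.choose_spec
    set S : Set X := f '' tA ∪ g '' tB with hSdef
    have hSfin : S.Finite := (htAfin.image f).union (htBfin.image g)
    have htAne : tA.Nonempty := by
      obtain ⟨a, ha, -⟩ := Set.mem_iUnion₂.1 (htAcov ha0)
      exact ⟨a, ha⟩
    have hSne : S.Nonempty := ⟨f htAne.choose, Or.inl ⟨htAne.choose, htAne.choose_spec, rfl⟩⟩
    set F : NonemptyCompacts X := ⟨⟨S, hSfin.isCompact⟩, hSne⟩ with hFdef
    have hFcoe : (F : Set X) = S := rfl
    have hdistF : dist F KA < ε := by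
      have hHD : hausdorffDist S (KA : Set X) ≤ δ + δ := by
        apply hausdorffDist_le_of_mem_dist (by positivity)
        · rintro x (⟨a, ha, rfl⟩ | ⟨b, hb, rfl⟩)
          · exact ⟨a, htAs ha, le_trans (le_of_lt (Metric.mem_ball.1 (hf a ha).1))
              (by linarith)⟩
          · exact ⟨a0, ha0, le_trans (le_of_lt (Metric.mem_ball.1 (hg b hb).1))
              (by linarith)⟩
        · intro y hy
          obtain ⟨a, ha, hya⟩ := Set.mem_iUnion₂.1 (htAcov hy)
          refine ⟨f a, Or.inl ⟨a, ha, rfl⟩, ?_⟩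
          calc dist y (f a) ≤ dist y a + dist a (f a) := dist_triangle _ _ _
            _ ≤ δ + δ := by
                have h1 := Metric.mem_ball.1 hya
                have h2 := Metric.mem_ball.1 (hf a ha).1
                rw [dist_comm] at h2
                exact add_le_add (le_of_lt h1) (le_of_lt h2)
      have : dist F KA = hausdorffDist S (KA : Set X) := NonemptyCompacts.dist_eq
      rw [this]
      have : δ + δ < ε := by rw [hδdef]; linarith
      linarith
    have hFU : F ∈ 𝒰 := hballU (Metric.mem_ball.2 (lt_of_lt_of_le hdistF (min_le_left _ _)))
    have hTnF : (TK^[n] F : Set X) = T^[n] '' S := tk_iterate T TK hTK n F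
    have hdistTF : dist (TK^[n] F) KB < ε := by
      have hHD : hausdorffDist (T^[n] '' S) (KB : Set X) ≤ δ + δ := by
        apply hausdorffDist_le_of_mem_dist (by positivity)
        · rintro x ⟨w, (⟨a, ha, rfl⟩ | ⟨b, hb, rfl⟩), rfl⟩
          · exact ⟨b0, hb0, le_trans (le_of_lt (Metric.mem_ball.1 (hf a ha).2))
              (by linarith)⟩
          · exact ⟨b, htBs hb, le_trans (le_of_lt (Metric.mem_ball.1 (hg b hb).2))
              (by linarith)⟩
        · intro y hy
          obtain ⟨b, hb, hyb⟩ := Set.mem_iUnion₂.1 (htBcov hy)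
          refine ⟨T^[n] (g b), ⟨g b, Or.inr ⟨b, hb, rfl⟩, rfl⟩, ?_⟩
          calc dist y (T^[n] (g b)) ≤ dist y b + dist b (T^[n] (g b)) := dist_triangle _ _ _
            _ ≤ δ + δ := by
                have h1 := Metric.mem_ball.1 hyb
                have h2 := Metric.mem_ball.1 (hg b hb).2
                rw [dist_comm] at h2
                exact add_le_add (le_of_lt h1) (le_of_lt h2)
      have heq : dist (TK^[n] F) KB = hausdorffDist ((TK^[n] F : Set X)) (KB : Set X) :=
        NonemptyCompacts.dist_eq
      rw [heq, hTnF]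
      have : δ + δ < ε := by rw [hδdef]; linarith
      linarith
    have hFV : TK^[n] F ∈ 𝒱 :=
      hballV (Metric.mem_ball.2 (lt_of_lt_of_le hdistTF (min_le_right _ _)))
    exact ⟨n, TK^[n] F, ⟨F, hFU, rfl⟩, hFV⟩
  · rintro htrans U V hU hV ⟨u0, hu0⟩ ⟨v0, hv0⟩
    classical
    obtain ⟨A, B, hA, hB, hu1, hu2, hABU⟩ :=
      isOpen_prod_iff.1 hU u0.1 u0.2 (by simpa using hu0)
    obtain ⟨C, D, hC, hD, hv1, hv2, hCDV⟩ :=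
      isOpen_prod_iff.1 hV v0.1 v0.2 (by simpa using hv0)
    -- Step 1: find s, z, w' with z, w' ∈ C, T^[s] z ∈ B, T^[s] w' ∈ D
    obtain ⟨s, w, ⟨K0, hK0U, rfl⟩, hwB, hwD⟩ :=
      htrans {K : NonemptyCompacts X | (K : Set X) ⊆ C}
        ({K : NonemptyCompacts X | ((K : Set X) ∩ B).Nonempty} ∩
          {K : NonemptyCompacts X | ((K : Set X) ∩ D).Nonempty})
        (isOpen_subsetSet hC) ((isOpen_meets hB).inter (isOpen_meets hD))
        ⟨⟨⟨{v0.1}, isCompact_singleton⟩, Set.singleton_nonempty _⟩,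
          by simpa [Set.singleton_subset_iff] using hv1⟩
        ⟨⟨⟨{u0.2, v0.2}, (Set.toFinite _).isCompact⟩, ⟨u0.2, Set.mem_insert _ _⟩⟩,
          ⟨u0.2, Set.mem_insert _ _, hu2⟩, ⟨v0.2, Set.mem_insert_of_mem _ rfl, hv2⟩⟩
    rw [Set.mem_setOf_eq, tk_iterate T TK hTK s K0] at hwB hwD
    obtain ⟨b1, ⟨z, hzK0, rfl⟩, hzB⟩ := hwB
    obtain ⟨d1, ⟨w', hw'K0, rfl⟩, hw'D⟩ := hwD
    -- Step 2
    obtain ⟨n, w2, ⟨K1, ⟨hK1A, hK1B⟩, rfl⟩, hK1Q⟩ :=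
      htrans ({K : NonemptyCompacts X | ((K : Set X) ∩ A).Nonempty} ∩
          {K : NonemptyCompacts X | ((T^[s]) '' (K : Set X) ∩ B).Nonempty})
        {K : NonemptyCompacts X | (K : Set X) ⊆ C ∩ T^[s] ⁻¹' D}
        ((isOpen_meets hA).inter (isOpen_meets_image T hT s hB))
        (isOpen_subsetSet (hC.inter ((hT.iterate s).isOpen_preimage D hD)))
        ⟨⟨⟨{u0.1, z}, (Set.toFinite _).isCompact⟩, ⟨u0.1, Set.mem_insert _ _⟩⟩,
          ⟨u0.1, Set.mem_insert _ _, hu1⟩, ⟨T^[s] z, ⟨z, Set.mem_insert_of_mem _ rfl, rfl⟩, hzB⟩⟩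
        ⟨⟨⟨{w'}, isCompact_singleton⟩, Set.singleton_nonempty _⟩,
          by simpa [Set.singleton_subset_iff] using ⟨hK0U hw'K0, hw'D⟩⟩
    rw [Set.mem_setOf_eq, tk_iterate T TK hTK n K1] at hK1Q
    obtain ⟨a, haK1, haA⟩ := hK1A
    obtain ⟨b2, ⟨c1, hc1K1, rfl⟩, hc1B⟩ := hK1B
    refine ⟨n, (fun p : X × X => (T p.1, T p.2))^[n] (a, T^[s] c1),
      ⟨(a, T^[s] c1), hABU ⟨haA, hc1B⟩, rfl⟩, hCDV ?_⟩
    rw [WMHypAux.pair_iterate]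
    constructor
    · exact (hK1Q ⟨a, haK1, rfl⟩).1
    · show T^[n] (T^[s] c1) ∈ D
      have hcm : T^[n] c1 ∈ C ∩ T^[s] ⁻¹' D := hK1Q ⟨c1, hc1K1, rfl⟩
      have h3 : T^[n] (T^[s] c1) = T^[s] (T^[n] c1) := by
        rw [← Function.iterate_add_apply, ← Function.iterate_add_apply, Nat.add_comm]
      rw [h3]
      exact hcm.2
end

section
/- Let (X,T) be a dynamical system on a compact metric space. The induced hyperspace system (K(X), T_K) is proximal if and only if ⋂_{n=1}^∞ T^n X is a singleton. -/
open TopologicalSpace Metric Set Filter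

private lemma iter_image_aux {X : Type*} [MetricSpace X] (T : X → X)
    (TK : NonemptyCompacts X → NonemptyCompacts X)
    (hTK : ∀ A : NonemptyCompacts X, (TK A : Set X) = T '' (A : Set X)) :
    ∀ (n : ℕ) (A : NonemptyCompacts X),
      ((TK^[n] A : NonemptyCompacts X) : Set X) = T^[n] '' (A : Set X) := by
  intro n
  induction n with
  | zero => intro A; simp
  | succ n ih =>
    intro A
    rw [Function.iterate_succ_apply, ih, hTK, ← Set.image_comp, ← Function.iterate_succ]

theorem hyperspace_proximal_iff_intersection_singleton
    {X : Type*} [MetricSpace X] [CompactSpace X] [Nonempty X]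
    (T : X → X) (hT : Continuous T)
    (TK : NonemptyCompacts X → NonemptyCompacts X)
    (hTK : ∀ A : NonemptyCompacts X, (TK A : Set X) = T '' (A : Set X)) :
    (∀ A B : NonemptyCompacts X,
      Filter.liminf (fun n : ℕ => dist (TK^[n] A) (TK^[n] B)) Filter.atTop = 0) ↔
    (∃ p : X, ⋂ n ≥ 1, T^[n] '' (Set.univ : Set X) = {p}) := by
  have iter := iter_image_aux T TK hTK
  -- The sets X_n = T^[n] '' univ
  set V : ℕ → Set X := fun n => T^[n] '' Set.univ with hV
  have hVc : ∀ n, IsCompact (V n) := fun n =>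
    isCompact_univ.image (hT.iterate n)
  have hVne : ∀ n, (V n).Nonempty := fun n => Set.Nonempty.image _ Set.univ_nonempty
  have hVanti : Antitone V := by
    intro n m hnm
    intro x hx
    obtain ⟨y, -, rfl⟩ := hx
    have : T^[m] y = T^[n] (T^[m - n] y) := by
      conv_lhs => rw [show m = n + (m - n) by omega]
      rw [Function.iterate_add_apply]
    rw [this]
    exact ⟨_, Set.mem_univ _, rfl⟩
  have hinter : (⋂ n ≥ 1, T^[n] '' (Set.univ : Set X)) = ⋂ n : ℕ, V (n + 1) := by
    ext x
    simp only [Set.mem_iInter]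
    constructor
    · intro h n; exact h (n + 1) (Nat.succ_le_succ (Nat.zero_le n))
    · intro h n hn
      have := h (n - 1)
      rwa [Nat.sub_add_cancel hn] at this
  -- The intersection is nonempty
  have hY : (⋂ n : ℕ, V (n + 1)).Nonempty := by
    apply IsCompact.nonempty_iInter_of_sequence_nonempty_isCompact_isClosed
    · intro n; exact hVanti (by omega)
    · intro n; exact hVne _
    · exact hVc 1
    · intro n; exact (hVc _).isClosed
  have hedist : ∀ (A B : NonemptyCompacts X),
      EMetric.hausdorffEdist (A : Set X) (B : Set X) ≠ ⊤ := fun A B =>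
    hausdorffEdist_ne_top_of_nonempty_of_bounded A.nonempty B.nonempty
      A.isCompact.isBounded B.isCompact.isBounded
  constructor
  · -- proximal → singleton
    intro H
    obtain ⟨p, hp⟩ := hY
    refine ⟨p, ?_⟩
    rw [hinter]
    apply Set.eq_singleton_iff_nonempty_unique_mem.2 ⟨⟨p, hp⟩, ?_⟩
    intro q hq
    -- use A = univ, B = {p}
    set A : NonemptyCompacts X := ⟨⟨Set.univ, isCompact_univ⟩, Set.univ_nonempty⟩ with hA
    set B : NonemptyCompacts X := ⟨⟨{p}, isCompact_singleton⟩, Set.singleton_nonempty p⟩ with hB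
    have key : ∀ ε > (0:ℝ), dist q p < ε := by
      intro ε hε
      have hlim := H A B
      have hbdd : Filter.IsCoboundedUnder (· ≥ ·) Filter.atTop
          (fun n : ℕ => dist (TK^[n] A) (TK^[n] B)) := by
        apply Filter.isCoboundedUnder_ge_of_le Filter.atTop
          (x := Metric.diam (Set.univ : Set (NonemptyCompacts X)))
        intro n
        exact Metric.dist_le_diam_of_mem isCompact_univ.isBounded
          (Set.mem_univ _) (Set.mem_univ _)
      have hfreq : ∃ᶠ n in Filter.atTop,
          dist (TK^[n] A) (TK^[n] B) < ε / 2 := by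
        apply Filter.frequently_lt_of_liminf_lt hbdd
        rw [hlim]; linarith
      obtain ⟨n, hn⟩ := hfreq.exists
      -- dist is Hausdorff distance between T^[n] '' univ and {T^[n] p}
      have hAn : ((TK^[n] A : NonemptyCompacts X) : Set X) = V n := by
        rw [iter]; rfl
      have hBn : ((TK^[n] B : NonemptyCompacts X) : Set X) = {T^[n] p} := by
        rw [iter]; simp [hB]
      rw [NonemptyCompacts.dist_eq, hAn, hBn] at hn
      have hne : EMetric.hausdorffEdist (V n) ({T^[n] p} : Set X) ≠ ⊤ := by
        have := hedist (TK^[n] A) (TK^[n] B)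
        rwa [hAn, hBn] at this
      have hqVn : q ∈ V n := by
        rcases n with _ | m
        · exact ⟨q, Set.mem_univ _, rfl⟩
        · exact Set.mem_iInter.1 hq m
      have hpVn : p ∈ V n := by
        rcases n with _ | m
        · exact ⟨p, Set.mem_univ _, rfl⟩
        · exact Set.mem_iInter.1 hp m
      have h1 : dist q (T^[n] p) < ε / 2 := by
        have := Metric.infDist_le_hausdorffDist_of_mem hqVn hne
        rw [Metric.infDist_singleton] at this
        exact this.trans_lt hn
      have h2 : dist p (T^[n] p) < ε / 2 := by
        have := Metric.infDist_le_hausdorffDist_of_mem hpVn hne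
        rw [Metric.infDist_singleton] at this
        exact this.trans_lt hn
      calc dist q p ≤ dist q (T^[n] p) + dist (T^[n] p) p := dist_triangle _ _ _
        _ < ε / 2 + ε / 2 := by rw [dist_comm (T^[n] p) p]; linarith
        _ = ε := by ring
    have hd0 : dist q p = 0 := by
      by_contra h
      have := key (dist q p) (lt_of_le_of_ne dist_nonneg (Ne.symm h))
      linarith
    exact dist_eq_zero.1 hd0
  · -- singleton → proximal
    intro ⟨p, hp⟩ A B
    rw [hinter] at hp
    have htend : Filter.Tendsto (fun n : ℕ => dist (TK^[n] A) (TK^[n] B))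
        Filter.atTop (nhds 0) := by
      rw [Metric.tendsto_atTop]
      intro ε hε
      -- find N with V N ⊆ ball p (ε/4)
      have hsub : ∃ N : ℕ, V (N + 1) ⊆ Metric.ball p (ε / 4) := by
        apply exists_subset_nhds_of_isCompact' (V := fun n : ℕ => V (n + 1))
        · intro i j
          exact ⟨max i j, hVanti (by omega), hVanti (by omega)⟩
        · intro n; exact hVc _
        · intro n; exact (hVc _).isClosed
        · intro x hx
          rw [hp] at hx
          rw [hx]
          exact Metric.ball_mem_nhds p (by linarith)
      obtain ⟨N, hN⟩ := hsub
      refine ⟨N + 1, fun n hn => ?_⟩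
      have hsubA : ((TK^[n] A : NonemptyCompacts X) : Set X) ⊆ Metric.ball p (ε / 4) := by
        rw [iter]
        refine Set.Subset.trans ?_ (Set.Subset.trans (hVanti hn) hN)
        exact Set.image_mono (Set.subset_univ _)
      have hsubB : ((TK^[n] B : NonemptyCompacts X) : Set X) ⊆ Metric.ball p (ε / 4) := by
        rw [iter]
        refine Set.Subset.trans ?_ (Set.Subset.trans (hVanti hn) hN)
        exact Set.image_mono (Set.subset_univ _)
      have hd : dist (TK^[n] A) (TK^[n] B) ≤ ε / 2 := by
        rw [NonemptyCompacts.dist_eq]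
        apply Metric.hausdorffDist_le_of_mem_dist (by linarith)
        · intro x hx
          obtain ⟨y, hy⟩ := (TK^[n] B).nonempty
          refine ⟨y, hy, ?_⟩
          have h1 := hsubA hx
          have h2 := hsubB hy
          rw [Metric.mem_ball] at h1 h2
          calc dist x y ≤ dist x p + dist p y := dist_triangle _ _ _
            _ ≤ ε / 2 := by rw [dist_comm p y]; linarith
        · intro y hy
          obtain ⟨x, hx⟩ := (TK^[n] A).nonempty
          refine ⟨x, hx, ?_⟩
          have h1 := hsubA hx
          have h2 := hsubB hy
          rw [Metric.mem_ball] at h1 h2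
          calc dist y x ≤ dist y p + dist p x := dist_triangle _ _ _
            _ ≤ ε / 2 := by rw [dist_comm p x]; linarith
      have : |dist (TK^[n] A) (TK^[n] B)| = dist (TK^[n] A) (TK^[n] B) :=
        abs_of_nonneg dist_nonneg
      rw [Real.dist_eq, sub_zero, this]
      linarith
    exact htend.liminf_eq
end
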